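/- arXiv:1910.13005 — 2 statements merged into one kernel-verified Lean document; each statement's English description precedes it below -/
import Mathlib

section
/- Let G be an ample Hausdorff groupoid and let (Σ, i, q) be a topologically trivial discrete twist by T ≤ R^× over G. Then the convolution (f *_Σ g)(ε) = Σ_{γ ∈ G^{s(q(ε))}} f(εP(γ)) g(P(γ)^{-1}) (for any continuous global section P) is well defined, independent of the choice of P, has finitely many nonzero summands, and makes A_R(G;Σ) an R-algebra. If R has a T-inverse involution r ↦ r̄, then f*(ε) := conj(f(ε^{-1})) defines an involution under which A_R(G;Σ) is a *-algebra over R. -/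
/-!
Common definitions: topological groupoids, bisections, étale/ample groupoids,
continuous `Rˣ`-valued 2-cocycles, and twisted Steinberg algebras.

A groupoid is modelled as a type `G` together with a composability predicate
`comp`, a (partial, junk-valued off composable pairs) multiplication `mul`,
and an inversion `inv`.  The range and source maps are `r γ = γ γ⁻¹` and
`s γ = γ⁻¹ γ`, and the unit space is the set of fixed points of `r`.
-/

namespace TwistedSteinberg

structure GroupoidStruct (G : Type*) where
  comp : G → G → Prop
  mul : G → G → G
  inv : G → G

namespace GroupoidStruct

variable {G : Type*}

/-- The range map `r γ = γ γ⁻¹`. -/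
def r (T : GroupoidStruct G) (γ : G) : G := T.mul γ (T.inv γ)

/-- The source map `s γ = γ⁻¹ γ`. -/
def s (T : GroupoidStruct G) (γ : G) : G := T.mul (T.inv γ) γ

/-- The unit space `G⁰`. -/
def unitSpace (T : GroupoidStruct G) : Set G := {x | T.r x = x}

/-- The axioms making `(comp, mul, inv)` a groupoid. -/
structure IsGroupoid (T : GroupoidStruct G) : Prop where
  comp_iff : ∀ a b, T.comp a b ↔ T.s a = T.r b
  assoc : ∀ a b c, T.comp a b → T.comp b c →
    T.mul (T.mul a b) c = T.mul a (T.mul b c)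
  inv_inv : ∀ a, T.inv (T.inv a) = a
  r_mul : ∀ a b, T.comp a b → T.r (T.mul a b) = T.r a
  s_mul : ∀ a b, T.comp a b → T.s (T.mul a b) = T.s b
  r_inv : ∀ a, T.r (T.inv a) = T.s a
  s_inv : ∀ a, T.s (T.inv a) = T.r a
  r_mul_self : ∀ a, T.mul (T.r a) a = a
  mul_s_self : ∀ a, T.mul a (T.s a) = a
  r_unit : ∀ a, T.r a ∈ T.unitSpace
  s_unit : ∀ a, T.s a ∈ T.unitSpace

/-- A topological groupoid: inversion is continuous and multiplication is
continuous on the set of composable pairs. -/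
structure IsTopGroupoid [TopologicalSpace G] (T : GroupoidStruct G)
    extends IsGroupoid T : Prop where
  continuous_inv : Continuous T.inv
  continuousOn_mul : ContinuousOn (fun p : G × G => T.mul p.1 p.2)
    {p : G × G | T.comp p.1 p.2}

/-- `B` is a bisection if it is contained in an open set `U` on which both `r`
and `s` restrict to homeomorphisms onto open subsets. -/
def IsBisection [TopologicalSpace G] (T : GroupoidStruct G) (B : Set G) : Prop :=
  ∃ U : Set G, B ⊆ U ∧ IsOpen U ∧ Set.InjOn T.r U ∧ Set.InjOn T.s U ∧
    ∀ V : Set G, V ⊆ U → IsOpen V → IsOpen (T.r '' V) ∧ IsOpen (T.s '' V)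

/-- A groupoid is étale if its range map is a local homeomorphism. -/
def IsEtale [TopologicalSpace G] (T : GroupoidStruct G) : Prop :=
  IsLocalHomeomorph T.r

/-- A groupoid is ample if it has a basis of compact open bisections. -/
def IsAmple [TopologicalSpace G] (T : GroupoidStruct G) : Prop :=
  TopologicalSpace.IsTopologicalBasis
    {B : Set G | IsCompact B ∧ IsOpen B ∧ T.IsBisection B}

/-- The product `BD` of two subsets of a groupoid. -/
def setMul (T : GroupoidStruct G) (B D : Set G) : Set G :=
  {x | ∃ a ∈ B, ∃ b ∈ D, T.comp a b ∧ T.mul a b = x}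

end GroupoidStruct

open GroupoidStruct

section Cocycle

variable {G R : Type*} [TopologicalSpace G] [CommRing R] [TopologicalSpace R]

/-- A continuous normalised `Rˣ`-valued 2-cocycle on the groupoid `T`. -/
structure IsCocycle (T : GroupoidStruct G) (σ : G → G → Rˣ) : Prop where
  continuousOn : ContinuousOn (fun p : G × G => ((σ p.1 p.2 : Rˣ) : R))
    {p : G × G | T.comp p.1 p.2}
  cocycle : ∀ a b c, T.comp a b → T.comp b c →
    σ a b * σ (T.mul a b) c = σ a (T.mul b c) * σ b c
  norm_left : ∀ γ : G, σ (T.r γ) γ = 1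
  norm_right : ∀ γ : G, σ γ (T.s γ) = 1

/-- The underlying `R`-module of the (twisted) Steinberg algebra: locally
constant compactly supported functions `G → R`. -/
def steinbergCarrier (G R : Type*) [TopologicalSpace G] [Zero R] : Set (G → R) :=
  {f | IsLocallyConstant f ∧ IsCompact (Function.support f)}

/-- The twisted convolution product
`(f *σ g)(γ) = ∑_{αβ = γ} σ(α,β) f(α) g(β)`. -/
noncomputable def conv (T : GroupoidStruct G) (σ : G → G → Rˣ)
    (f g : G → R) (γ : G) : R :=
  ∑ᶠ (p : G × G) (_ : T.comp p.1 p.2 ∧ T.mul p.1 p.2 = γ),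
    ((σ p.1 p.2 : Rˣ) : R) * f p.1 * g p.2

/-- A `T`-inverse involution on `R`: a ring involution restricting to
inversion on the subgroup `Tsub ≤ Rˣ`. -/
def IsTInverseInvolution (Tsub : Subgroup Rˣ) (c : R → R) : Prop :=
  c 1 = 1 ∧ (∀ x y, c (x + y) = c x + c y) ∧ (∀ x y, c (x * y) = c x * c y) ∧
    (∀ x, c (c x) = x) ∧ ∀ z : Rˣ, z ∈ Tsub → c ((z : Rˣ) : R) = ((z⁻¹ : Rˣ) : R)

/-- The twisted involution `f*(γ) = σ(γ,γ⁻¹)⁻¹ ⬝ c (f (γ⁻¹))`. -/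
noncomputable def convStar (T : GroupoidStruct G) (σ : G → G → Rˣ) (c : R → R)
    (f : G → R) (γ : G) : R :=
  (((σ γ (T.inv γ))⁻¹ : Rˣ) : R) * c (f (T.inv γ))

end Cocycle
section Twist

/-!
Discrete twists `G⁰ × T → Σ → G` over a Hausdorff étale groupoid `G`,
where `T = Tsub` is a subgroup of the units `Rˣ` of a discrete commutative
unital ring `R`.  The inclusion is modelled as a map `i : G → Tsub → Σ`
(only its values `i x z` for `x ∈ G⁰` are relevant).
-/

variable {G S R : Type*} [TopologicalSpace G] [TopologicalSpace S]
  [CommRing R] [TopologicalSpace R]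

/-- A discrete twist `(Σ, i, q)` by `Tsub ≤ Rˣ` over `G`. -/
structure IsDiscreteTwist (TG : GroupoidStruct G) (TS : GroupoidStruct S)
    (Tsub : Subgroup Rˣ) (i : G → Tsub → S) (q : S → G) : Prop where
  topS : TS.IsTopGroupoid
  t2S : T2Space S
  locallyCompactS : LocallyCompactSpace S
  unit_eq : TS.unitSpace = (fun x => i x 1) '' TG.unitSpace
  i_continuousOn : ContinuousOn (fun p : G × Tsub => i p.1 p.2)
    (TG.unitSpace ×ˢ (Set.univ : Set Tsub))
  i_injective : ∀ x ∈ TG.unitSpace, ∀ x' ∈ TG.unitSpace, ∀ z z' : Tsub,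
    i x z = i x' z' → x = x' ∧ z = z'
  i_comp : ∀ x ∈ TG.unitSpace, ∀ z w : Tsub, TS.comp (i x z) (i x w)
  i_mul : ∀ x ∈ TG.unitSpace, ∀ z w : Tsub, TS.mul (i x z) (i x w) = i x (z * w)
  i_inv : ∀ x ∈ TG.unitSpace, ∀ z : Tsub, TS.inv (i x z) = i x z⁻¹
  q_continuous : Continuous q
  q_surjective : Function.Surjective q
  q_quotient : ∀ V : Set G, IsOpen V ↔ IsOpen (q ⁻¹' V)
  q_comp : ∀ ε δ, TS.comp ε δ → TG.comp (q ε) (q δ)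
  q_mul : ∀ ε δ, TS.comp ε δ → q (TS.mul ε δ) = TG.mul (q ε) (q δ)
  q_inv : ∀ ε, q (TS.inv ε) = TG.inv (q ε)
  q_i : ∀ x ∈ TG.unitSpace, ∀ z : Tsub, q (i x z) = x
  i_q_unit : ∀ ε ∈ TS.unitSpace, i (q ε) 1 = ε
  q_unit_mem : ∀ ε ∈ TS.unitSpace, q ε ∈ TG.unitSpace
  exact_fibre : ∀ x ∈ TG.unitSpace, ∀ ε, q ε = x ↔ ∃ z : Tsub, ε = i x z
  central_comp_left : ∀ (ε : S) (z : Tsub), TS.comp (i (TG.r (q ε)) z) ε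
  central_comp_right : ∀ (ε : S) (z : Tsub), TS.comp ε (i (TG.s (q ε)) z)
  central : ∀ (ε : S) (z : Tsub),
    TS.mul (i (TG.r (q ε)) z) ε = TS.mul ε (i (TG.s (q ε)) z)
  locally_trivial : ∀ α : G, ∃ B : Set G, α ∈ B ∧ IsOpen B ∧ TG.IsBisection B ∧
    ∃ P : G → S, ContinuousOn P B ∧ (∀ β ∈ B, q (P β) = β) ∧
      Set.BijOn (fun p : G × Tsub => TS.mul (i (TG.r p.1) p.2) (P p.1))
        (B ×ˢ (Set.univ : Set Tsub)) (q ⁻¹' B) ∧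
      ContinuousOn (fun p : G × Tsub => TS.mul (i (TG.r p.1) p.2) (P p.1))
        (B ×ˢ (Set.univ : Set Tsub)) ∧
      ∀ V ⊆ B ×ˢ (Set.univ : Set Tsub), IsOpen V →
        IsOpen ((fun p : G × Tsub => TS.mul (i (TG.r p.1) p.2) (P p.1)) '' V)

/-- The action `z ⬝ ε = i(r(ε), z) ε` of `Tsub` on the twist `Σ`. -/
def twistAct (TG : GroupoidStruct G) (TS : GroupoidStruct S)
    {Tsub : Subgroup Rˣ} (i : G → Tsub → S) (q : S → G) (z : Tsub) (ε : S) : S :=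
  TS.mul (i (TG.r (q ε)) z) ε

/-- A continuous global section `P : G → Σ` of the twist. -/
def IsGlobalSection (TG : GroupoidStruct G) (TS : GroupoidStruct S)
    (q : S → G) (P : G → S) : Prop :=
  Continuous P ∧ (∀ γ, q (P γ) = γ) ∧ ∀ x ∈ TG.unitSpace, P x ∈ TS.unitSpace

/-- The 2-cocycle `σ` is induced by the section `P`, i.e.
`P(α) P(β) P(αβ)⁻¹ = i(r(α), σ(α,β))` for composable `(α,β)`. -/
def InducesCocycle (TG : GroupoidStruct G) (TS : GroupoidStruct S)
    {Tsub : Subgroup Rˣ} (i : G → Tsub → S) (P : G → S) (σ : G → G → Tsub) : Prop :=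
  ∀ α β, TG.comp α β →
    TS.mul (TS.mul (P α) (P β)) (TS.inv (P (TG.mul α β))) = i (TG.r α) (σ α β)

/-- A continuous normalised 2-cocycle with values in the subgroup `Tsub ≤ Rˣ`. -/
structure IsCocycleSub (TG : GroupoidStruct G) (Tsub : Subgroup Rˣ)
    (σ : G → G → Tsub) : Prop where
  continuousOn : ContinuousOn (fun p : G × G => (((σ p.1 p.2 : Rˣ)) : R))
    {p : G × G | TG.comp p.1 p.2}
  cocycle : ∀ a b c, TG.comp a b → TG.comp b c →
    σ a b * σ (TG.mul a b) c = σ a (TG.mul b c) * σ b c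
  norm_left : ∀ γ : G, σ (TG.r γ) γ = 1
  norm_right : ∀ γ : G, σ γ (TG.s γ) = 1

/-- `σ` and `τ` are cohomologous via the continuous function `b : G → Tsub`. -/
def CohomologousVia (TG : GroupoidStruct G) {Tsub : Subgroup Rˣ}
    (σ τ : G → G → Tsub) (b : G → Tsub) : Prop :=
  Continuous (fun γ : G => ((b γ : Rˣ) : R)) ∧ (∀ x ∈ TG.unitSpace, b x = 1) ∧
    ∀ α β, TG.comp α β → σ α β * (τ α β)⁻¹ = b α * b β * (b (TG.mul α β))⁻¹

/-- The twisted groupoid `G ×_σ T`. -/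
def prodTwist (TG : GroupoidStruct G) (Tsub : Subgroup Rˣ) (σ : G → G → Tsub) :
    GroupoidStruct (G × Tsub) where
  comp p p' := TG.comp p.1 p'.1
  mul p p' := (TG.mul p.1 p'.1, σ p.1 p'.1 * p.2 * p'.2)
  inv p := (TG.inv p.1, (σ p.1 (TG.inv p.1))⁻¹ * p.2⁻¹)

/-- The inclusion `i_σ : G⁰ × T → G ×_σ T`. -/
def prodTwistI (Tsub : Subgroup Rˣ) : G → Tsub → G × Tsub := fun x z => (x, z)

/-- The projection `q_σ : G ×_σ T → G`. -/
def prodTwistQ (Tsub : Subgroup Rˣ) : G × Tsub → G := fun p => p.1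

/-- An isomorphism of discrete twists: a homeomorphism and groupoid
isomorphism intertwining the inclusions and projections. -/
def IsTwistIso {S1 S2 : Type*} [TopologicalSpace S1] [TopologicalSpace S2]
    (TG : GroupoidStruct G) (T1 : GroupoidStruct S1) (T2 : GroupoidStruct S2)
    {Tsub : Subgroup Rˣ} (i1 : G → Tsub → S1) (q1 : S1 → G)
    (i2 : G → Tsub → S2) (q2 : S2 → G) (ψ : S1 → S2) : Prop :=
  Function.Bijective ψ ∧ Continuous ψ ∧ (∀ V : Set S1, IsOpen V → IsOpen (ψ '' V)) ∧
    (∀ δ ε, T1.comp δ ε → T2.comp (ψ δ) (ψ ε) ∧ ψ (T1.mul δ ε) = T2.mul (ψ δ) (ψ ε)) ∧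
    (∀ x ∈ TG.unitSpace, ∀ z : Tsub, ψ (i1 x z) = i2 x z) ∧
    ∀ ε, q2 (ψ ε) = q1 ε

/-- The carrier of the twisted Steinberg algebra `A_R(G; Σ)`: continuous
`Tsub`-equivariant functions `f : Σ → R` such that `q(supp f)` has compact
closure. -/
def twistCarrier (TG : GroupoidStruct G) (TS : GroupoidStruct S)
    {Tsub : Subgroup Rˣ} (i : G → Tsub → S) (q : S → G) : Set (S → R) :=
  {f | Continuous f ∧
    (∀ (z : Tsub) (ε : S), f (TS.mul (i (TG.r (q ε)) z) ε) = ((z : Rˣ) : R) * f ε) ∧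
    IsCompact (closure (q '' Function.support f))}

/-- The convolution `(f *_Σ g)(ε) = ∑_{γ ∈ G^{s(q(ε))}} f(ε P(γ)) g(P(γ)⁻¹)`. -/
noncomputable def twistConv (TG : GroupoidStruct G) (TS : GroupoidStruct S)
    (q : S → G) (P : G → S) (f g : S → R) (ε : S) : R :=
  ∑ᶠ (γ : G) (_ : TG.r γ = TG.s (q ε)), f (TS.mul ε (P γ)) * g (TS.inv (P γ))

/-- The involution `f*(ε) = c (f (ε⁻¹))` on `A_R(G; Σ)`. -/
def twistStar (TS : GroupoidStruct S) (c : R → R) (f : S → R) (ε : S) : R :=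
  c (f (TS.inv ε))

end Twist

/-! ### Auxiliary lemmas on groupoids -/

namespace GroupoidStruct

variable {G : Type*} {T : GroupoidStruct G} {a b c x y : G}

lemma IsGroupoid.comp_inv_right (h : T.IsGroupoid) (a : G) : T.comp a (T.inv a) :=
  (h.comp_iff _ _).2 (h.r_inv a).symm

lemma IsGroupoid.comp_inv_left (h : T.IsGroupoid) (a : G) : T.comp (T.inv a) a :=
  (h.comp_iff _ _).2 (h.s_inv a)

lemma IsGroupoid.s_r (h : T.IsGroupoid) (a : G) : T.s (T.r a) = T.r a := by
  show T.s (T.mul a (T.inv a)) = _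
  rw [h.s_mul _ _ (h.comp_inv_right a), h.s_inv]

lemma IsGroupoid.r_s (h : T.IsGroupoid) (a : G) : T.r (T.s a) = T.s a := by
  show T.r (T.mul (T.inv a) a) = _
  rw [h.r_mul _ _ (h.comp_inv_left a), h.r_inv]

lemma IsGroupoid.inv_unique (h : T.IsGroupoid) (hyx : T.comp y x)
    (h2 : T.mul y x = T.s x) : T.inv x = y := by
  have hsy : T.s y = T.r x := (h.comp_iff y x).1 hyx
  calc T.inv x = T.mul (T.r (T.inv x)) (T.inv x) := (h.r_mul_self _).symm
    _ = T.mul (T.mul y x) (T.inv x) := by rw [h.r_inv, ← h2]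
    _ = T.mul y (T.mul x (T.inv x)) := h.assoc _ _ _ hyx (h.comp_inv_right x)
    _ = T.mul y (T.s y) := by rw [show T.mul x (T.inv x) = T.r x from rfl, hsy]
    _ = y := h.mul_s_self y

lemma IsGroupoid.inv_mul_cancel_left (h : T.IsGroupoid) (hab : T.comp a b) :
    T.mul (T.inv a) (T.mul a b) = b := by
  rw [← h.assoc _ _ _ (h.comp_inv_left a) hab,
    show T.mul (T.inv a) a = T.s a from rfl, (h.comp_iff a b).1 hab, h.r_mul_self]

lemma IsGroupoid.mul_inv_cancel_left (h : T.IsGroupoid) (hc : T.r a = T.r c) :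
    T.mul a (T.mul (T.inv a) c) = c := by
  have hcomp : T.comp (T.inv a) c := (h.comp_iff _ _).2 (by rw [h.s_inv, hc])
  rw [← h.assoc _ _ _ (h.comp_inv_right a) hcomp,
    show T.mul a (T.inv a) = T.r a from rfl, hc, h.r_mul_self]

lemma IsGroupoid.inv_mul (h : T.IsGroupoid) (hab : T.comp a b) :
    T.inv (T.mul a b) = T.mul (T.inv b) (T.inv a) := by
  have hsab : T.s a = T.r b := (h.comp_iff a b).1 hab
  have hii : T.comp (T.inv b) (T.inv a) :=
    (h.comp_iff _ _).2 (by rw [h.s_inv, h.r_inv, hsab])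
  refine h.inv_unique ?_ ?_
  · exact (h.comp_iff _ _).2 (by rw [h.s_mul _ _ hii, h.s_inv, h.r_mul _ _ hab])
  · calc T.mul (T.mul (T.inv b) (T.inv a)) (T.mul a b)
        = T.mul (T.inv b) (T.mul (T.inv a) (T.mul a b)) := by
          refine h.assoc _ _ _ hii ?_
          exact (h.comp_iff _ _).2 (by rw [h.s_inv, h.r_mul _ _ hab])
      _ = T.mul (T.inv b) b := by rw [h.inv_mul_cancel_left hab]
      _ = T.s (T.mul a b) := by rw [h.s_mul _ _ hab]; rfl

lemma IsGroupoid.comp_mul_right_iff (h : T.IsGroupoid) (hab : T.comp a b) :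
    T.comp (T.mul a b) c ↔ T.comp b c := by
  rw [h.comp_iff, h.comp_iff, h.s_mul _ _ hab]

lemma IsGroupoid.comp_mul_left_iff (h : T.IsGroupoid) (hbc : T.comp b c) :
    T.comp a (T.mul b c) ↔ T.comp a b := by
  rw [h.comp_iff, h.comp_iff, h.r_mul _ _ hbc]

/-- continuity of the range map for topological groupoids -/
lemma IsTopGroupoid.continuous_r [TopologicalSpace G] (h : T.IsTopGroupoid) :
    Continuous T.r := by
  have hpair : Continuous fun a : G => (a, T.inv a) := continuous_id.prodMk h.continuous_inv
  have := h.continuousOn_mul.comp (hpair.continuousOn (s := Set.univ))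
    (fun a _ => h.comp_inv_right a)
  exact continuousOn_univ.1 this

lemma IsTopGroupoid.continuous_s [TopologicalSpace G] (h : T.IsTopGroupoid) :
    Continuous T.s := by
  have hpair : Continuous fun a : G => (T.inv a, a) := h.continuous_inv.prodMk continuous_id
  have := h.continuousOn_mul.comp (hpair.continuousOn (s := Set.univ))
    (fun a _ => h.comp_inv_left a)
  exact continuousOn_univ.1 this

end GroupoidStruct

/-! ### Auxiliary lemmas on discrete twists -/

section TwistAux

open GroupoidStruct

variable {G S R : Type*} [TopologicalSpace G] [TopologicalSpace S]
  [CommRing R] [TopologicalSpace R]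
  {TG : GroupoidStruct G} {TS : GroupoidStruct S} {Tsub : Subgroup Rˣ}
  {i : G → Tsub → S} {q : S → G}

variable (hG : TG.IsGroupoid) (hTw : IsDiscreteTwist TG TS Tsub i q)

include hG hTw

lemma tw_q_s (ε : S) : q (TS.s ε) = TG.s (q ε) := by
  have hS := hTw.topS.toIsGroupoid
  show q (TS.mul (TS.inv ε) ε) = _
  rw [hTw.q_mul _ _ (hS.comp_inv_left ε), hTw.q_inv]; rfl

lemma tw_q_r (ε : S) : q (TS.r ε) = TG.r (q ε) := by
  have hS := hTw.topS.toIsGroupoid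
  show q (TS.mul ε (TS.inv ε)) = _
  rw [hTw.q_mul _ _ (hS.comp_inv_right ε), hTw.q_inv]; rfl

lemma tw_s_eqi (ε : S) : TS.s ε = i (TG.s (q ε)) 1 := by
  have h1 := hTw.i_q_unit (TS.s ε) (hTw.topS.toIsGroupoid.s_unit ε)
  rw [tw_q_s hG hTw] at h1; exact h1.symm

lemma tw_r_eqi (ε : S) : TS.r ε = i (TG.r (q ε)) 1 := by
  have h1 := hTw.i_q_unit (TS.r ε) (hTw.topS.toIsGroupoid.r_unit ε)
  rw [tw_q_r hG hTw] at h1; exact h1.symm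

lemma tw_comp_q_iff (ε δ : S) : TS.comp ε δ ↔ TG.comp (q ε) (q δ) := by
  have hS := hTw.topS.toIsGroupoid
  constructor
  · exact hTw.q_comp ε δ
  · intro h
    refine (hS.comp_iff _ _).2 ?_
    rw [tw_s_eqi hG hTw, tw_r_eqi hG hTw, (hG.comp_iff _ _).1 h]

lemma tw_sq_inv (ε : S) : TG.s (q (TS.inv ε)) = TG.r (q ε) := by
  rw [hTw.q_inv, hG.s_inv]

lemma tw_rq_inv (ε : S) : TG.r (q (TS.inv ε)) = TG.s (q ε) := by
  rw [hTw.q_inv, hG.r_inv]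

lemma tw_q_act (z : Tsub) (ε : S) : q (TS.mul (i (TG.r (q ε)) z) ε) = q ε := by
  rw [hTw.q_mul _ _ (hTw.central_comp_left ε z), hTw.q_i _ (hG.r_unit _)]
  exact hG.r_mul_self (q ε)

lemma tw_act_one (ε : S) : TS.mul (i (TG.r (q ε)) 1) ε = ε := by
  rw [← tw_r_eqi hG hTw ε]
  exact hTw.topS.toIsGroupoid.r_mul_self ε

lemma tw_act_act (z w : Tsub) (ε : S) :
    TS.mul (i (TG.r (q (TS.mul (i (TG.r (q ε)) w) ε))) z) (TS.mul (i (TG.r (q ε)) w) ε)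
      = TS.mul (i (TG.r (q ε)) (z * w)) ε := by
  have hS := hTw.topS.toIsGroupoid
  rw [tw_q_act hG hTw,
    ← hS.assoc _ _ _ (hTw.i_comp _ (hG.r_unit _) z w) (hTw.central_comp_left ε w),
    hTw.i_mul _ (hG.r_unit _) z w]

lemma tw_mul_act_right {ε δ : S} (hc : TS.comp ε δ) (z : Tsub) :
    TS.mul ε (TS.mul (i (TG.r (q δ)) z) δ)
      = TS.mul (i (TG.r (q (TS.mul ε δ))) z) (TS.mul ε δ) := by
  have hS := hTw.topS.toIsGroupoid
  have hc' : TG.comp (q ε) (q δ) := hTw.q_comp _ _ hc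
  have hqm : q (TS.mul ε δ) = TG.mul (q ε) (q δ) := hTw.q_mul _ _ hc
  calc TS.mul ε (TS.mul (i (TG.r (q δ)) z) δ)
      = TS.mul ε (TS.mul δ (i (TG.s (q δ)) z)) := by rw [hTw.central δ z]
    _ = TS.mul (TS.mul ε δ) (i (TG.s (q δ)) z) :=
        (hS.assoc _ _ _ hc (hTw.central_comp_right δ z)).symm
    _ = TS.mul (TS.mul ε δ) (i (TG.s (q (TS.mul ε δ))) z) := by
        rw [hqm, hG.s_mul _ _ hc']
    _ = TS.mul (i (TG.r (q (TS.mul ε δ))) z) (TS.mul ε δ) := (hTw.central _ z).symm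

lemma tw_mul_act_left {ε δ : S} (hc : TS.comp ε δ) (z : Tsub) :
    TS.mul (TS.mul (i (TG.r (q ε)) z) ε) δ
      = TS.mul (i (TG.r (q (TS.mul ε δ))) z) (TS.mul ε δ) := by
  have hS := hTw.topS.toIsGroupoid
  have hr : TG.r (q (TS.mul ε δ)) = TG.r (q ε) := by
    rw [hTw.q_mul _ _ hc, hG.r_mul _ _ (hTw.q_comp _ _ hc)]
  rw [hS.assoc _ _ _ (hTw.central_comp_left ε z) hc, hr]

lemma tw_inv_act (z : Tsub) (ε : S) :
    TS.inv (TS.mul (i (TG.r (q ε)) z) ε)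
      = TS.mul (i (TG.r (q (TS.inv ε))) z⁻¹) (TS.inv ε) := by
  have hS := hTw.topS.toIsGroupoid
  have hx : TG.r (q ε) ∈ TG.unitSpace := hG.r_unit _
  rw [hS.inv_mul (hTw.central_comp_left ε z), hTw.i_inv _ hx z]
  have h2 : TG.s (q (TS.inv ε)) = TG.r (q ε) := tw_sq_inv hG hTw ε
  rw [← h2, ← hTw.central (TS.inv ε) z⁻¹]

lemma tw_exists_act {ε δ : S} (hq : q ε = q δ) :
    ∃ z : Tsub, ε = TS.mul (i (TG.r (q δ)) z) δ := by
  have hS := hTw.topS.toIsGroupoid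
  have hcomp : TS.comp ε (TS.inv δ) := by
    refine (tw_comp_q_iff hG hTw _ _).2 ?_
    rw [hTw.q_inv]
    exact (hG.comp_iff _ _).2 (by rw [hq, hG.r_inv])
  have hqη : q (TS.mul ε (TS.inv δ)) = TG.r (q δ) := by
    rw [hTw.q_mul _ _ hcomp, hTw.q_inv, hq]; rfl
  obtain ⟨z, hz⟩ := (hTw.exact_fibre _ (hG.r_unit (q δ)) _).1 hqη
  refine ⟨z, ?_⟩
  have hss : TS.s ε = TS.s δ := by
    rw [tw_s_eqi hG hTw, tw_s_eqi hG hTw, hq]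
  have hmul : TS.mul (TS.mul ε (TS.inv δ)) δ = ε := by
    rw [hS.assoc _ _ _ hcomp (hS.comp_inv_left δ),
      show TS.mul (TS.inv δ) δ = TS.s δ from rfl, ← hss, hS.mul_s_self]
  rw [← hmul, hz]

end TwistAux

/-! ### Finiteness and finsum toolkit -/

section ToolsAux

open GroupoidStruct Function
open scoped Classical

lemma finsum_reindex {α β M : Type*} [AddCommMonoid M] {F : α → M} {Gm : β → M}
    (hF : (Function.support F).Finite) (e : α → β) (e' : β → α)
    (h1 : ∀ a, F a ≠ 0 → Gm (e a) = F a)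
    (h2 : ∀ a, F a ≠ 0 → e' (e a) = a)
    (h3 : ∀ b, Gm b ≠ 0 → F (e' b) = Gm b)
    (h4 : ∀ b, Gm b ≠ 0 → e (e' b) = b) :
    ∑ᶠ a, F a = ∑ᶠ b, Gm b := by
  have hGm : (Function.support Gm).Finite := by
    refine Set.Finite.subset (hF.image e) ?_
    intro b hb
    exact ⟨e' b, Function.mem_support.2 (by rw [h3 b hb]; exact hb), h4 b hb⟩
  rw [finsum_eq_sum _ hF, finsum_eq_sum _ hGm]
  refine Finset.sum_bij' (fun a _ => e a) (fun b _ => e' b) ?_ ?_ ?_ ?_ ?_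
  · intro a ha
    rw [Set.Finite.mem_toFinset] at ha ⊢
    exact Function.mem_support.2 (by rw [h1 a ha]; exact ha)
  · intro b hb
    rw [Set.Finite.mem_toFinset] at hb ⊢
    exact Function.mem_support.2 (by rw [h3 b hb]; exact hb)
  · intro a ha
    rw [Set.Finite.mem_toFinset] at ha
    exact h2 a ha
  · intro b hb
    rw [Set.Finite.mem_toFinset] at hb
    exact h4 b hb
  · intro a ha
    rw [Set.Finite.mem_toFinset] at ha
    exact (h1 a ha).symm

variable {G S R : Type*} [TopologicalSpace G] [TopologicalSpace S]
  [CommRing R] [TopologicalSpace R]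
  {TG : GroupoidStruct G} {TS : GroupoidStruct S} {Tsub : Subgroup Rˣ}
  {i : G → Tsub → S} {q : S → G} {P : G → S}

lemma if_support_subset {α M : Type*} [Zero M] {p : α → Prop} {v : α → M} :
    Function.support (fun γ => if p γ then v γ else 0) ⊆ {γ | p γ ∧ v γ ≠ 0} := by
  intro γ h
  by_cases hp : p γ
  · exact ⟨hp, by simpa [hp] using h⟩
  · exact absurd (by simp [hp]) h

lemma fiber_finite (hample : TG.IsAmple) {K : Set G} (hK : IsCompact K) (x : G) :
    {γ | γ ∈ K ∧ TG.r γ = x}.Finite := by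
  have hcov : ∀ γ ∈ K, ∃ B : Set G, (IsCompact B ∧ IsOpen B ∧ TG.IsBisection B) ∧ γ ∈ B := by
    intro γ _
    obtain ⟨B, hB, hmem, -⟩ := hample.exists_subset_of_mem_open (Set.mem_univ γ) isOpen_univ
    exact ⟨B, hB, hmem⟩
  choose! B hB hmem using hcov
  obtain ⟨t, hts, htfin, hcov2⟩ := hK.elim_finite_subcover_image
    (fun γ hγ => (hB γ hγ).2.1) (fun γ hγ => Set.mem_biUnion hγ (hmem γ hγ))
  have hsub : ∀ γ ∈ t, Set.Finite {δ | δ ∈ B γ ∧ TG.r δ = x} := by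
    intro γ hγ
    obtain ⟨U, hBU, _, hinj, _, _⟩ := (hB γ (hts hγ)).2.2
    refine Set.Subsingleton.finite ?_
    intro δ hδ δ' hδ'
    exact hinj (hBU hδ.1) (hBU hδ'.1) (hδ.2.trans hδ'.2.symm)
  refine Set.Finite.subset (htfin.biUnion hsub) (fun δ hδ => ?_)
  obtain ⟨γ, hγt, hδB⟩ := Set.mem_iUnion₂.1 (hcov2 hδ.1)
  exact Set.mem_biUnion hγt ⟨hδB, hδ.2⟩

lemma support_fin (hample : TG.IsAmple) (hTG : TG.IsTopGroupoid)
    (hTw : IsDiscreteTwist TG TS Tsub i q) (hP : IsGlobalSection TG TS q P)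
    {g : S → R} (hcpt : IsCompact (closure (q '' Function.support g)))
    (φ : G → R) (x : G) :
    {γ : G | TG.r γ = x ∧ φ γ * g (TS.inv (P γ)) ≠ 0}.Finite := by
  have hK : IsCompact (TG.inv '' (closure (q '' Function.support g))) :=
    hcpt.image hTG.continuous_inv
  refine Set.Finite.subset (fiber_finite hample hK x) ?_
  rintro γ ⟨hr, hne⟩
  have hgne : g (TS.inv (P γ)) ≠ 0 := right_ne_zero_of_mul hne
  have hmem : TG.inv γ ∈ closure (q '' Function.support g) :=
    subset_closure ⟨TS.inv (P γ), hgne, by rw [hTw.q_inv, hP.2.1]⟩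
  exact ⟨⟨TG.inv γ, hmem, hTG.inv_inv γ⟩, hr⟩

lemma conv_eq_finsum_if (f g : S → R) (ε : S) :
    twistConv TG TS q P f g ε
      = ∑ᶠ γ : G, if TG.r γ = TG.s (q ε) then f (TS.mul ε (P γ)) * g (TS.inv (P γ)) else 0 :=
  finsum_congr fun _ => finsum_eq_if

end ToolsAux

/-! ### Main part lemmas -/

section PartsAux

open GroupoidStruct Function
open scoped Classical

variable {G S R : Type*} [TopologicalSpace G] [TopologicalSpace S]
  [CommRing R] [TopologicalSpace R]
  {TG : GroupoidStruct G} {TS : GroupoidStruct S} {Tsub : Subgroup Rˣ}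
  {i : G → Tsub → S} {q : S → G} {P : G → S}

variable (hTG : TG.IsTopGroupoid) (hTw : IsDiscreteTwist TG TS Tsub i q)
  (hP : IsGlobalSection TG TS q P)

include hTG hTw hP

lemma part_indep (P' : G → S) (hP' : IsGlobalSection TG TS q P') (f g : S → R)
    (hf : f ∈ twistCarrier (R := R) TG TS i q) (hg : g ∈ twistCarrier (R := R) TG TS i q) :
    twistConv TG TS q P f g = twistConv TG TS q P' f g := by
  have hG := hTG.toIsGroupoid
  funext ε
  rw [conv_eq_finsum_if, conv_eq_finsum_if]
  refine finsum_congr fun γ => ?_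
  by_cases hcond : TG.r γ = TG.s (q ε)
  · rw [if_pos hcond, if_pos hcond]
    obtain ⟨z, hz⟩ := tw_exists_act hG hTw
      (show q (P' γ) = q (P γ) by rw [hP'.2.1, hP.2.1])
    have hcomp : TS.comp ε (P γ) := (tw_comp_q_iff hG hTw _ _).2
      (by rw [hP.2.1]; exact (hG.comp_iff _ _).2 hcond.symm)
    have h1 : f (TS.mul ε (P' γ)) = ((z : Rˣ) : R) * f (TS.mul ε (P γ)) := by
      rw [hz, tw_mul_act_right hG hTw hcomp z]
      exact hf.2.1 z _
    have h2 : g (TS.inv (P' γ)) = (((z⁻¹ : Tsub) : Rˣ) : R) * g (TS.inv (P γ)) := by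
      rw [hz, tw_inv_act hG hTw z (P γ)]
      exact hg.2.1 z⁻¹ _
    rw [h1, h2, mul_mul_mul_comm]
    have hzz : ((z : Rˣ) : R) * (((z⁻¹ : Tsub) : Rˣ) : R) = 1 := by
      rw [← Units.val_mul]
      norm_cast
      rw [mul_inv_cancel]
      rfl
    rw [hzz, one_mul]
  · rw [if_neg hcond, if_neg hcond]

lemma part_finite (hample : TG.IsAmple) (f g : S → R)
    (hg : g ∈ twistCarrier (R := R) TG TS i q) (ε : S) :
    {γ : G | TG.r γ = TG.s (q ε)
      ∧ f (TS.mul ε (P γ)) * g (TS.inv (P γ)) ≠ 0}.Finite :=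
  support_fin hample hTG hTw hP hg.2.2 _ _

lemma conv_equivariant (hample : TG.IsAmple) {f g : S → R}
    (hf : f ∈ twistCarrier (R := R) TG TS i q) (hg : g ∈ twistCarrier (R := R) TG TS i q)
    (z : Tsub) (ε : S) :
    twistConv TG TS q P f g (TS.mul (i (TG.r (q ε)) z) ε)
      = ((z : Rˣ) : R) * twistConv TG TS q P f g ε := by
  have hG := hTG.toIsGroupoid
  rw [conv_eq_finsum_if, conv_eq_finsum_if]
  have hq := tw_q_act hG hTw z ε
  simp only [hq]
  have hfin : (support fun γ : G =>
      if TG.r γ = TG.s (q ε) then f (TS.mul ε (P γ)) * g (TS.inv (P γ)) else 0).Finite :=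
    Set.Finite.subset (part_finite hTG hTw hP hample f g hg ε) if_support_subset
  rw [mul_finsum' _ _ hfin]
  refine finsum_congr fun γ => ?_
  by_cases hcond : TG.r γ = TG.s (q ε)
  · rw [if_pos hcond, if_pos hcond]
    have hcomp : TS.comp ε (P γ) := (tw_comp_q_iff hG hTw _ _).2
      (by rw [hP.2.1]; exact (hG.comp_iff _ _).2 hcond.symm)
    rw [tw_mul_act_left hG hTw hcomp z, hf.2.1 z _, mul_assoc]
  · rw [if_neg hcond, if_neg hcond, mul_zero]

lemma conv_support_compact [T2Space G] {f g : S → R}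
    (hf : f ∈ twistCarrier (R := R) TG TS i q) (hg : g ∈ twistCarrier (R := R) TG TS i q) :
    IsCompact (closure (q '' support (twistConv TG TS q P f g))) := by
  have hG := hTG.toIsGroupoid
  set Kf := closure (q '' support f) with hKfdef
  set Kg := closure (q '' support g) with hKgdef
  set C : Set (G × G) := (Kf ×ˢ (TG.inv '' Kg)) ∩ {p | TG.comp p.1 (TG.inv p.2)} with hCdef
  have hCc : IsCompact C := by
    refine (hf.2.2.prod (hg.2.2.image hTG.continuous_inv)).inter_right ?_
    have : {p : G × G | TG.comp p.1 (TG.inv p.2)}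
        = {p : G × G | TG.s p.1 = TG.r (TG.inv p.2)} := Set.ext fun p => hG.comp_iff _ _
    rw [this]
    exact isClosed_eq (hTG.continuous_s.comp continuous_fst)
      ((hTG.continuous_r.comp hTG.continuous_inv).comp continuous_snd)
  have hmapc : ContinuousOn (fun p : G × G => TG.mul p.1 (TG.inv p.2)) C := by
    have hφ : Continuous fun p : G × G => (p.1, TG.inv p.2) :=
      continuous_fst.prodMk (hTG.continuous_inv.comp continuous_snd)
    exact hTG.continuousOn_mul.comp hφ.continuousOn (fun p hp => hp.2)
  have hL : IsCompact ((fun p : G × G => TG.mul p.1 (TG.inv p.2)) '' C) :=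
    hCc.image_of_continuousOn hmapc
  refine IsCompact.of_isClosed_subset hL isClosed_closure
    (closure_minimal ?_ hL.isClosed)
  rintro x ⟨ε, hε, rfl⟩
  have hex : ∃ γ : G, (if TG.r γ = TG.s (q ε)
      then f (TS.mul ε (P γ)) * g (TS.inv (P γ)) else 0) ≠ 0 := by
    by_contra hno
    push_neg at hno
    exact hε (by rw [show twistConv TG TS q P f g ε = _ from conv_eq_finsum_if f g ε,
      finsum_eq_zero_of_forall_eq_zero hno])
  obtain ⟨γ, hγ⟩ := hex
  have hcond : TG.r γ = TG.s (q ε) := by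
    by_contra hc; exact hγ (if_neg hc)
  rw [if_pos hcond] at hγ
  have hfne : f (TS.mul ε (P γ)) ≠ 0 := left_ne_zero_of_mul hγ
  have hgne : g (TS.inv (P γ)) ≠ 0 := right_ne_zero_of_mul hγ
  have hcomp : TS.comp ε (P γ) := (tw_comp_q_iff hG hTw _ _).2
    (by rw [hP.2.1]; exact (hG.comp_iff _ _).2 hcond.symm)
  have hcompG : TG.comp (q ε) γ := by
    have := hTw.q_comp _ _ hcomp; rwa [hP.2.1] at this
  have hqmul : q (TS.mul ε (P γ)) = TG.mul (q ε) γ := by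
    rw [hTw.q_mul _ _ hcomp, hP.2.1]
  refine ⟨(TG.mul (q ε) γ, γ), ⟨⟨?_, ?_⟩, ?_⟩, ?_⟩
  · exact subset_closure ⟨TS.mul ε (P γ), hfne, hqmul⟩
  · have hmem : TG.inv γ ∈ Kg :=
      subset_closure ⟨TS.inv (P γ), hgne, by rw [hTw.q_inv, hP.2.1]⟩
    exact ⟨TG.inv γ, hmem, hG.inv_inv γ⟩
  · show TG.comp (TG.mul (q ε) γ) (TG.inv γ)
    exact (hG.comp_iff _ _).2 (by rw [hG.s_mul _ _ hcompG, hG.r_inv])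
  · show TG.mul (TG.mul (q ε) γ) (TG.inv γ) = q ε
    rw [hG.assoc _ _ _ hcompG (hG.comp_inv_right γ),
      show TG.mul γ (TG.inv γ) = TG.r γ from rfl, hcond, hG.mul_s_self]

lemma conv_continuous [T2Space G] [DiscreteTopology R] (hample : TG.IsAmple)
    {f g : S → R} (hf : f ∈ twistCarrier (R := R) TG TS i q)
    (hg : g ∈ twistCarrier (R := R) TG TS i q) :
    Continuous (twistConv TG TS q P f g) := by
  have hG := hTG.toIsGroupoid
  rw [continuous_iff_continuousAt]
  intro ε₀
  have hNG : Nonempty G := ⟨q ε₀⟩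
  rw [ContinuousAt, nhds_discrete R, Filter.tendsto_pure]
  set sq : S → G := fun ε => TG.s (q ε) with hsqdef
  have hsqc : Continuous sq := hTG.continuous_s.comp hTw.q_continuous
  set x₀ := sq ε₀ with hx₀def
  set Kg : Set G := TG.inv '' (closure (q '' support g)) with hKgdef
  have hKgc : IsCompact Kg := hg.2.2.image hTG.continuous_inv
  have hF₀fin : Set.Finite {γ | γ ∈ Kg ∧ TG.r γ = x₀} := fiber_finite hample hKgc x₀
  set F₀ := hF₀fin.toFinset with hF₀def
  have hmemF₀ : ∀ γ, γ ∈ F₀ ↔ γ ∈ Kg ∧ TG.r γ = x₀ := fun γ => Set.Finite.mem_toFinset _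
  -- choose compact open bisections around the fibre points
  have hch : ∀ γ ∈ F₀, ∃ B : Set G, (IsCompact B ∧ IsOpen B ∧ TG.IsBisection B) ∧ γ ∈ B := by
    intro γ _
    obtain ⟨B, hB, hmem, -⟩ := hample.exists_subset_of_mem_open (Set.mem_univ γ) isOpen_univ
    exact ⟨B, hB, hmem⟩
  choose! B hBp hBmem using hch
  have hBopen : ∀ γ ∈ F₀, IsOpen (B γ) := fun γ hγ => (hBp γ hγ).2.1
  choose! U hBU hUopen hUinjr hUinjs hUmaps using (fun γ (hγ : γ ∈ F₀) => (hBp γ hγ).2.2)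
  have hrBopen : ∀ γ ∈ F₀, IsOpen (TG.r '' B γ) := fun γ hγ =>
    (hUmaps γ hγ (B γ) (hBU γ hγ) (hBopen γ hγ)).1
  have hx₀B : ∀ γ ∈ F₀, x₀ ∈ TG.r '' B γ := fun γ hγ =>
    ⟨γ, hBmem γ hγ, ((hmemF₀ γ).1 hγ).2⟩
  -- local inverse of r on each bisection
  set cinv : G → G → G := fun γ => Function.invFunOn TG.r (B γ) with hcinvdef
  have hcinv_mem : ∀ γ ∈ F₀, ∀ x ∈ TG.r '' B γ, cinv γ x ∈ B γ := by
    intro γ hγ x hx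
    obtain ⟨a, ha, hax⟩ := hx
    exact Function.invFunOn_mem ⟨a, ha, hax⟩
  have hcinv_eq : ∀ γ ∈ F₀, ∀ x ∈ TG.r '' B γ, TG.r (cinv γ x) = x := by
    intro γ hγ x hx
    obtain ⟨a, ha, hax⟩ := hx
    exact Function.invFunOn_eq ⟨a, ha, hax⟩
  have hcinv_uniq : ∀ γ ∈ F₀, ∀ δ ∈ B γ, cinv γ (TG.r δ) = δ := by
    intro γ hγ δ hδ
    exact hUinjr γ hγ (hBU γ hγ (hcinv_mem γ hγ _ ⟨δ, hδ, rfl⟩))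
      (hBU γ hγ hδ) (hcinv_eq γ hγ _ ⟨δ, hδ, rfl⟩)
  have hcinv_cont : ∀ γ ∈ F₀, ContinuousOn (cinv γ) (TG.r '' B γ) := by
    intro γ hγ
    rw [continuousOn_iff']
    intro t hto
    refine ⟨TG.r '' (B γ ∩ t),
      (hUmaps γ hγ (B γ ∩ t) (fun a ha => hBU γ hγ ha.1) ((hBopen γ hγ).inter hto)).1, ?_⟩
    ext x
    constructor
    · rintro ⟨hxt, hxB⟩
      exact ⟨⟨cinv γ x, ⟨hcinv_mem γ hγ x hxB, hxt⟩, hcinv_eq γ hγ x hxB⟩, hxB⟩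
    · rintro ⟨⟨a, ⟨haB, hat⟩, hax⟩, hxB⟩
      refine ⟨?_, hxB⟩
      have : cinv γ x = a := by
        rw [← hax, hcinv_uniq γ hγ a haB]
      rw [Set.mem_preimage, this]; exact hat
  -- the complementary compact part
  set M : Set G := Kg \ ⋃ γ ∈ F₀, B γ with hMdef
  have hMc : IsCompact M := hKgc.diff (isOpen_biUnion fun γ hγ => hBopen γ hγ)
  have hMclosed : IsClosed (TG.r '' M) := (hMc.image hTG.continuous_r).isClosed
  have hx₀M : x₀ ∉ TG.r '' M := by
    rintro ⟨δ, ⟨hδKg, hδn⟩, hδr⟩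
    exact hδn (Set.mem_biUnion ((hmemF₀ δ).2 ⟨hδKg, hδr⟩)
      (hBmem δ ((hmemF₀ δ).2 ⟨hδKg, hδr⟩)))
  set O : Set G := (⋂ γ ∈ F₀, TG.r '' B γ) ∩ (TG.r '' M)ᶜ with hOdef
  have hOopen : IsOpen O :=
    (isOpen_biInter_finset hrBopen).inter hMclosed.isOpen_compl
  have hx₀O : x₀ ∈ O :=
    ⟨Set.mem_iInter₂.2 hx₀B, hx₀M⟩
  set W : Set S := sq ⁻¹' O with hWdef
  have hWopen : IsOpen W := hOopen.preimage hsqc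
  have hε₀W : ε₀ ∈ W := hx₀O
  -- the local terms
  set Tm : G → S → R := fun γ ε =>
    f (TS.mul ε (P (cinv γ (sq ε)))) * g (TS.inv (P (cinv γ (sq ε)))) with hTmdef
  have hsqW : ∀ γ ∈ F₀, ∀ ε ∈ W, sq ε ∈ TG.r '' B γ := by
    intro γ hγ ε hε
    exact Set.mem_iInter₂.1 hε.1 γ hγ
  have hTmcont : ∀ γ ∈ F₀, ContinuousOn (Tm γ) (sq ⁻¹' (TG.r '' B γ)) := by
    intro γ hγ
    have hd : ContinuousOn (fun ε => cinv γ (sq ε)) (sq ⁻¹' (TG.r '' B γ)) :=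
      (hcinv_cont γ hγ).comp hsqc.continuousOn (fun ε hε => hε)
    have hgpart : ContinuousOn (fun ε => g (TS.inv (P (cinv γ (sq ε)))))
        (sq ⁻¹' (TG.r '' B γ)) :=
      (hg.1.comp (hTw.topS.continuous_inv.comp hP.1)).comp_continuousOn hd
    have hpair : ContinuousOn (fun ε : S => (ε, P (cinv γ (sq ε))))
        (sq ⁻¹' (TG.r '' B γ)) :=
      continuousOn_id.prodMk (hP.1.comp_continuousOn hd)
    have hmaps : ∀ ε ∈ sq ⁻¹' (TG.r '' B γ),
        (ε, P (cinv γ (sq ε))) ∈ {p : S × S | TS.comp p.1 p.2} := by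
      intro ε hε
      refine (tw_comp_q_iff hG hTw _ _).2 ?_
      rw [hP.2.1]
      exact (hG.comp_iff _ _).2 (hcinv_eq γ hγ _ hε).symm
    have hmulc : ContinuousOn (fun ε => TS.mul ε (P (cinv γ (sq ε))))
        (sq ⁻¹' (TG.r '' B γ)) :=
      hTw.topS.continuousOn_mul.comp hpair hmaps
    exact (hf.1.comp_continuousOn hmulc).mul hgpart
  -- value of the convolution on W
  have hval : ∀ ε ∈ W,
      (∀ γ₁ ∈ F₀, ∀ γ₂ ∈ F₀, γ₁ ≠ γ₂ → cinv γ₁ (sq ε) ≠ cinv γ₂ (sq ε)) →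
      twistConv TG TS q P f g ε = ∑ γ ∈ F₀, Tm γ ε := by
    intro ε hεW hdist
    have hu : twistConv TG TS q P f g ε = ∑ᶠ δ,
        (if TG.r δ = sq ε then f (TS.mul ε (P δ)) * g (TS.inv (P δ)) else 0) :=
      conv_eq_finsum_if f g ε
    have husupp : support (fun δ =>
        (if TG.r δ = sq ε then f (TS.mul ε (P δ)) * g (TS.inv (P δ)) else 0))
        ⊆ ↑(F₀.image (fun γ => cinv γ (sq ε))) := by
      intro δ hδ
      obtain ⟨hcond, hne⟩ := if_support_subset hδ
      have hgne : g (TS.inv (P δ)) ≠ 0 := right_ne_zero_of_mul hne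
      have hδKg : δ ∈ Kg := by
        refine ⟨TG.inv δ, subset_closure ⟨TS.inv (P δ), hgne, ?_⟩, hG.inv_inv δ⟩
        rw [hTw.q_inv, hP.2.1]
      have hδM : δ ∉ M := by
        intro hδM
        exact hεW.2 ⟨δ, hδM, hcond⟩
      have hδB : ∃ γ ∈ F₀, δ ∈ B γ := by
        by_contra hno
        push_neg at hno
        exact hδM ⟨hδKg, fun hmem => by
          obtain ⟨γ, hγ, hδγ⟩ := Set.mem_iUnion₂.1 hmem
          exact hno γ hγ hδγ⟩
      obtain ⟨γ, hγ, hδγ⟩ := hδB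
      refine Finset.mem_coe.2 (Finset.mem_image.2 ⟨γ, hγ, ?_⟩)
      rw [← hcond, hcinv_uniq γ hγ δ hδγ]
    rw [hu, finsum_eq_finset_sum_of_support_subset _ husupp,
      Finset.sum_image (fun γ₁ h₁ γ₂ h₂ hne => by_contra fun hc => hdist γ₁ h₁ γ₂ h₂ hc hne)]
    refine Finset.sum_congr rfl fun γ hγ => ?_
    rw [if_pos (hcinv_eq γ hγ _ (hsqW γ hγ ε hεW))]
  -- eventual statements
  have hW_ev : ∀ᶠ ε in nhds ε₀, ε ∈ W := hWopen.eventually_mem hε₀W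
  have hcinv_at : ∀ γ ∈ F₀, ContinuousAt (fun ε => cinv γ (sq ε)) ε₀ := by
    intro γ hγ
    refine ((hcinv_cont γ hγ).comp hsqc.continuousOn (fun ε hε => hε)).continuousAt ?_
    exact ((hrBopen γ hγ).preimage hsqc).mem_nhds (hx₀B γ hγ)
  have hcinv_ε₀ : ∀ γ ∈ F₀, cinv γ (sq ε₀) = γ := by
    intro γ hγ
    rw [show sq ε₀ = TG.r γ from ((hmemF₀ γ).1 hγ).2.symm, hcinv_uniq γ hγ γ (hBmem γ hγ)]
  have hdist_ev : ∀ᶠ ε in nhds ε₀,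
      ∀ γ₁ ∈ F₀, ∀ γ₂ ∈ F₀, γ₁ ≠ γ₂ → cinv γ₁ (sq ε) ≠ cinv γ₂ (sq ε) := by
    rw [Finset.eventually_all]
    intro γ₁ h₁
    rw [Finset.eventually_all]
    intro γ₂ h₂
    by_cases hne : γ₁ = γ₂
    · exact Filter.Eventually.of_forall fun ε h => absurd hne h
    · obtain ⟨u₁, u₂, hu₁, hu₂, hm₁, hm₂, hdisj⟩ := t2_separation hne
      have e₁ : ∀ᶠ ε in nhds ε₀, cinv γ₁ (sq ε) ∈ u₁ :=
        (hcinv_at γ₁ h₁).eventually_mem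
          (hu₁.mem_nhds (by rw [hcinv_ε₀ γ₁ h₁]; exact hm₁))
      have e₂ : ∀ᶠ ε in nhds ε₀, cinv γ₂ (sq ε) ∈ u₂ :=
        (hcinv_at γ₂ h₂).eventually_mem
          (hu₂.mem_nhds (by rw [hcinv_ε₀ γ₂ h₂]; exact hm₂))
      exact (e₁.and e₂).mono fun ε ⟨m₁, m₂⟩ _ heq =>
        Set.disjoint_left.1 hdisj m₁ (heq ▸ m₂)
  have hTm_ev : ∀ᶠ ε in nhds ε₀, ∀ γ ∈ F₀, Tm γ ε = Tm γ ε₀ := by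
    rw [Finset.eventually_all]
    intro γ hγ
    have hat : ContinuousAt (Tm γ) ε₀ :=
      (hTmcont γ hγ).continuousAt
        (((hrBopen γ hγ).preimage hsqc).mem_nhds (hx₀B γ hγ))
    exact hat.eventually (p := fun y => y = Tm γ ε₀) (by rw [nhds_discrete R]; exact Filter.eventually_pure.2 rfl)
  filter_upwards [hW_ev, hdist_ev, hTm_ev] with ε hεW hεdist hεTm
  have hdist₀ : ∀ γ₁ ∈ F₀, ∀ γ₂ ∈ F₀, γ₁ ≠ γ₂ → cinv γ₁ (sq ε₀) ≠ cinv γ₂ (sq ε₀) := by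
    intro γ₁ h₁ γ₂ h₂ hne
    rw [hcinv_ε₀ γ₁ h₁, hcinv_ε₀ γ₂ h₂]; exact hne
  rw [hval ε hεW hεdist, hval ε₀ hε₀W hdist₀]
  exact Finset.sum_congr rfl fun γ hγ => hεTm γ hγ

lemma conv_assoc (hample : TG.IsAmple) {f g h : S → R}
    (hf : f ∈ twistCarrier (R := R) TG TS i q)
    (hg : g ∈ twistCarrier (R := R) TG TS i q)
    (hh : h ∈ twistCarrier (R := R) TG TS i q) :
    twistConv TG TS q P (twistConv TG TS q P f g) h
      = twistConv TG TS q P f (twistConv TG TS q P g h) := by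
  have hG := hTG.toIsGroupoid
  have hS := hTw.topS.toIsGroupoid
  funext ε
  set A : G × G → R := fun p =>
    if TG.r p.1 = TG.s (q ε) ∧ TG.r p.2 = TG.s p.1 then
      f (TS.mul (TS.mul ε (P p.1)) (P p.2)) * g (TS.inv (P p.2)) * h (TS.inv (P p.1))
    else 0 with hAdef
  set Bf : G × G → R := fun p =>
    if TG.r p.1 = TG.s (q ε) ∧ TG.r p.2 = TG.r p.1 then
      f (TS.mul ε (P p.1)) * (g (TS.mul (TS.inv (P p.1)) (P p.2)) * h (TS.inv (P p.2)))
    else 0 with hBdef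
  set e : G × G → G × G := fun p => (TG.mul p.1 p.2, p.1) with hedef
  set e' : G × G → G × G := fun p => (p.2, TG.mul (TG.inv p.2) p.1) with he'def
  -- the termwise computation
  have termEq : ∀ γ δ : G, TG.r γ = TG.s (q ε) → TG.r δ = TG.s γ →
      A (γ, δ) = Bf (TG.mul γ δ, γ) := by
    intro γ δ hc1 hc2
    have hcompγδ : TG.comp γ δ := (hG.comp_iff _ _).2 hc2.symm
    have hrα : TG.r (TG.mul γ δ) = TG.r γ := hG.r_mul _ _ hcompγδ
    have hcompεP : TS.comp ε (P γ) := (tw_comp_q_iff hG hTw _ _).2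
      (by rw [hP.2.1]; exact (hG.comp_iff _ _).2 hc1.symm)
    have hcompεPα : TS.comp ε (P (TG.mul γ δ)) := (tw_comp_q_iff hG hTw _ _).2
      (by rw [hP.2.1]; exact (hG.comp_iff _ _).2 (by rw [hrα]; exact hc1.symm))
    have hcompP : TS.comp (P γ) (P δ) := (tw_comp_q_iff hG hTw _ _).2
      (by rw [hP.2.1, hP.2.1]; exact hcompγδ)
    have hqζ0 : q (TS.mul (P γ) (P δ)) = TG.mul γ δ := by
      rw [hTw.q_mul _ _ hcompP, hP.2.1, hP.2.1]
    obtain ⟨z, hz⟩ := tw_exists_act hG hTw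
      (show q (TS.mul (P γ) (P δ)) = q (P (TG.mul γ δ)) by rw [hqζ0, hP.2.1])
    have hPα : TS.mul (i (TG.r (q (TS.mul (P γ) (P δ)))) z⁻¹) (TS.mul (P γ) (P δ))
        = P (TG.mul γ δ) := by
      conv_lhs => rw [hz]
      rw [tw_act_act hG hTw z⁻¹ z (P (TG.mul γ δ)), inv_mul_cancel, tw_act_one hG hTw]
    have hfpart : f (TS.mul (TS.mul ε (P γ)) (P δ))
        = ((z : Rˣ) : R) * f (TS.mul ε (P (TG.mul γ δ))) := by
      rw [hS.assoc _ _ _ hcompεP hcompP, hz, tw_mul_act_right hG hTw hcompεPα z]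
      exact hf.2.1 z _
    have hcompii : TS.comp (TS.inv (P δ)) (TS.inv (P γ)) := (hS.comp_iff _ _).2
      (by rw [hS.s_inv, hS.r_inv, tw_r_eqi hG hTw, tw_s_eqi hG hTw, hP.2.1, hP.2.1, hc2])
    have hsPγ : TS.s (P γ) = TS.s (TS.inv (P δ)) := by
      rw [hS.s_inv, tw_s_eqi hG hTw, tw_r_eqi hG hTw, hP.2.1, hP.2.1, hc2]
    have hinvζγ : TS.mul (TS.inv (TS.mul (P γ) (P δ))) (P γ) = TS.inv (P δ) := by
      rw [hS.inv_mul hcompP, hS.assoc _ _ _ hcompii (hS.comp_inv_left (P γ)),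
        show TS.mul (TS.inv (P γ)) (P γ) = TS.s (P γ) from rfl, hsPγ, hS.mul_s_self]
    have hcomp2 : TS.comp (TS.inv (TS.mul (P γ) (P δ))) (P γ) :=
      (tw_comp_q_iff hG hTw _ _).2 (by
        rw [hTw.q_inv, hqζ0, hP.2.1]
        exact (hG.comp_iff _ _).2 (by rw [hG.s_inv, hG.r_mul _ _ hcompγδ]))
    have hgpart : g (TS.mul (TS.inv (P (TG.mul γ δ))) (P γ))
        = ((z : Rˣ) : R) * g (TS.inv (P δ)) := by
      rw [← hPα, tw_inv_act hG hTw z⁻¹ (TS.mul (P γ) (P δ)), inv_inv,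
        tw_mul_act_left hG hTw hcomp2 z, hinvζγ]
      exact hg.2.1 z _
    rw [hAdef, hBdef]
    simp only
    rw [if_pos ⟨hc1, hc2⟩, if_pos ⟨by rw [hrα]; exact hc1, hrα.symm⟩, hfpart, hgpart]
    ring
  -- support finiteness
  have hAsupp : (support A).Finite := by
    have hfin1 : Set.Finite {γ : G | TG.r γ = TG.s (q ε)
        ∧ (1:R) * h (TS.inv (P γ)) ≠ 0} :=
      support_fin hample hTG hTw hP hh.2.2 (fun _ => 1) _
    have hfin2 : ∀ x : G, Set.Finite {γ : G | TG.r γ = x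
        ∧ (1:R) * g (TS.inv (P γ)) ≠ 0} :=
      fun x => support_fin hample hTG hTw hP hg.2.2 (fun _ => 1) x
    refine Set.Finite.subset (Set.Finite.prod hfin1
      (hfin1.biUnion (fun γ _ => hfin2 (TG.s γ)))) ?_
    rintro ⟨γ, δ⟩ hp
    have hne : A (γ, δ) ≠ 0 := hp
    by_cases hc : TG.r γ = TG.s (q ε) ∧ TG.r δ = TG.s γ
    · rw [hAdef] at hne
      simp only at hne
      rw [if_pos hc] at hne
      have hhne : h (TS.inv (P γ)) ≠ 0 := right_ne_zero_of_mul hne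
      have hgne : g (TS.inv (P δ)) ≠ 0 := right_ne_zero_of_mul (left_ne_zero_of_mul hne)
      have hγm : γ ∈ {γ : G | TG.r γ = TG.s (q ε) ∧ (1:R) * h (TS.inv (P γ)) ≠ 0} :=
        ⟨hc.1, by rw [one_mul]; exact hhne⟩
      exact ⟨hγm, Set.mem_biUnion hγm ⟨hc.2, by rw [one_mul]; exact hgne⟩⟩
    · exact absurd (by rw [hAdef]; simp only; exact if_neg hc) hne
  have h1 : ∀ p, A p ≠ 0 → Bf (e p) = A p := by
    rintro ⟨γ, δ⟩ hne
    have hc : TG.r γ = TG.s (q ε) ∧ TG.r δ = TG.s γ := by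
      by_contra hcn
      exact hne (by rw [hAdef]; simp only; exact if_neg hcn)
    exact (termEq γ δ hc.1 hc.2).symm
  have h2 : ∀ p, A p ≠ 0 → e' (e p) = p := by
    rintro ⟨γ, δ⟩ hne
    have hc : TG.r γ = TG.s (q ε) ∧ TG.r δ = TG.s γ := by
      by_contra hcn
      exact hne (by rw [hAdef]; simp only; exact if_neg hcn)
    have : TG.mul (TG.inv γ) (TG.mul γ δ) = δ :=
      hG.inv_mul_cancel_left ((hG.comp_iff _ _).2 hc.2.symm)
    simp only [hedef, he'def, this]
  have h3 : ∀ p, Bf p ≠ 0 → A (e' p) = Bf p := by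
    rintro ⟨α, β⟩ hne
    have hc : TG.r α = TG.s (q ε) ∧ TG.r β = TG.r α := by
      by_contra hcn
      exact hne (by rw [hBdef]; simp only; exact if_neg hcn)
    have hcompβ : TG.comp (TG.inv β) α := (hG.comp_iff _ _).2 (by rw [hG.s_inv, hc.2])
    have hb : TG.mul β (TG.mul (TG.inv β) α) = α := hG.mul_inv_cancel_left hc.2
    have hA := termEq β (TG.mul (TG.inv β) α) (by rw [hc.2]; exact hc.1)
      (by rw [hG.r_mul _ _ hcompβ, hG.r_inv])
    rw [hb] at hA
    exact hA
  have h4 : ∀ p, Bf p ≠ 0 → e (e' p) = p := by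
    rintro ⟨α, β⟩ hne
    have hc : TG.r α = TG.s (q ε) ∧ TG.r β = TG.r α := by
      by_contra hcn
      exact hne (by rw [hBdef]; simp only; exact if_neg hcn)
    simp only [hedef, he'def, hG.mul_inv_cancel_left hc.2]
  have hBsupp : (support Bf).Finite := by
    refine Set.Finite.subset (hAsupp.image e) ?_
    intro b hb
    exact ⟨e' b, mem_support.2 (by rw [h3 b hb]; exact hb), h4 b hb⟩
  -- identify the two sides with pair finsums
  have hLHS : twistConv TG TS q P (twistConv TG TS q P f g) h ε
      = ∑ᶠ γ, ∑ᶠ δ, A (γ, δ) := by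
    rw [conv_eq_finsum_if]
    refine finsum_congr fun γ => ?_
    by_cases hc : TG.r γ = TG.s (q ε)
    · rw [if_pos hc]
      have hcompεP : TS.comp ε (P γ) := (tw_comp_q_iff hG hTw _ _).2
        (by rw [hP.2.1]; exact (hG.comp_iff _ _).2 hc.symm)
      have hcompG : TG.comp (q ε) γ := by
        have := hTw.q_comp _ _ hcompεP; rwa [hP.2.1] at this
      have hsq : TG.s (q (TS.mul ε (P γ))) = TG.s γ := by
        rw [hTw.q_mul _ _ hcompεP, hP.2.1, hG.s_mul _ _ hcompG]
      have hfinv : (support fun δ : G => if TG.r δ = TG.s (q (TS.mul ε (P γ)))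
          then f (TS.mul (TS.mul ε (P γ)) (P δ)) * g (TS.inv (P δ)) else 0).Finite :=
        Set.Finite.subset
          (support_fin hample hTG hTw hP hg.2.2
            (fun δ => f (TS.mul (TS.mul ε (P γ)) (P δ))) _) if_support_subset
      rw [conv_eq_finsum_if, finsum_mul' _ _ hfinv]
      refine finsum_congr fun δ => ?_
      by_cases hc2 : TG.r δ = TG.s (q (TS.mul ε (P γ)))
      · rw [if_pos hc2, hAdef]
        simp only
        rw [if_pos ⟨hc, by rw [← hsq]; exact hc2⟩]
      · rw [if_neg hc2, hAdef]
        simp only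
        rw [if_neg (fun hcc => hc2 (by rw [hsq]; exact hcc.2)), zero_mul]
    · rw [if_neg hc]
      refine (finsum_eq_zero_of_forall_eq_zero fun δ => ?_).symm
      rw [hAdef]; simp only; exact if_neg (fun hcc => hc hcc.1)
  have hRHS : twistConv TG TS q P f (twistConv TG TS q P g h) ε
      = ∑ᶠ α, ∑ᶠ β, Bf (α, β) := by
    rw [conv_eq_finsum_if]
    refine finsum_congr fun α => ?_
    by_cases hc : TG.r α = TG.s (q ε)
    · rw [if_pos hc]
      have hsq : TG.s (q (TS.inv (P α))) = TG.r α := by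
        rw [hTw.q_inv, hP.2.1, hG.s_inv]
      have hfinv : (support fun β : G => if TG.r β = TG.s (q (TS.inv (P α)))
          then g (TS.mul (TS.inv (P α)) (P β)) * h (TS.inv (P β)) else 0).Finite :=
        Set.Finite.subset
          (support_fin hample hTG hTw hP hh.2.2
            (fun β => g (TS.mul (TS.inv (P α)) (P β))) _) if_support_subset
      rw [conv_eq_finsum_if, mul_finsum' _ _ hfinv]
      refine finsum_congr fun β => ?_
      by_cases hc2 : TG.r β = TG.s (q (TS.inv (P α)))
      · rw [if_pos hc2, hBdef]
        simp only
        rw [if_pos ⟨hc, by rw [← hsq]; exact hc2⟩]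
      · rw [if_neg hc2, hBdef]
        simp only
        rw [if_neg (fun hcc => hc2 (by rw [hsq]; exact hcc.2)), mul_zero]
    · rw [if_neg hc]
      refine (finsum_eq_zero_of_forall_eq_zero fun β => ?_).symm
      rw [hBdef]; simp only; exact if_neg (fun hcc => hc hcc.1)
  rw [hLHS, hRHS, ← finsum_curry A hAsupp, ← finsum_curry Bf hBsupp]
  exact finsum_reindex hAsupp e e' h1 h2 h3 h4

lemma conv_add_left (hample : TG.IsAmple) (f g h : S → R)
    (hh : h ∈ twistCarrier (R := R) TG TS i q) :
    twistConv TG TS q P (f + g) h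
      = twistConv TG TS q P f h + twistConv TG TS q P g h := by
  funext ε
  rw [Pi.add_apply, conv_eq_finsum_if, conv_eq_finsum_if, conv_eq_finsum_if]
  have hfin : ∀ φ : S → R, (support fun γ : G => if TG.r γ = TG.s (q ε)
      then φ (TS.mul ε (P γ)) * h (TS.inv (P γ)) else 0).Finite := fun φ =>
    Set.Finite.subset (support_fin hample hTG hTw hP hh.2.2
      (fun γ => φ (TS.mul ε (P γ))) _) if_support_subset
  rw [← finsum_add_distrib (hfin f) (hfin g)]
  refine finsum_congr fun γ => ?_
  by_cases hc : TG.r γ = TG.s (q ε)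
  · simp [hc, add_mul]
  · simp [hc]

lemma conv_add_right (hample : TG.IsAmple) (f g h : S → R)
    (hg : g ∈ twistCarrier (R := R) TG TS i q)
    (hh : h ∈ twistCarrier (R := R) TG TS i q) :
    twistConv TG TS q P f (g + h)
      = twistConv TG TS q P f g + twistConv TG TS q P f h := by
  funext ε
  rw [Pi.add_apply, conv_eq_finsum_if, conv_eq_finsum_if, conv_eq_finsum_if]
  have hfin1 : (support fun γ : G => if TG.r γ = TG.s (q ε)
      then f (TS.mul ε (P γ)) * g (TS.inv (P γ)) else 0).Finite :=
    Set.Finite.subset (support_fin hample hTG hTw hP hg.2.2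
      (fun γ => f (TS.mul ε (P γ))) _) if_support_subset
  have hfin2 : (support fun γ : G => if TG.r γ = TG.s (q ε)
      then f (TS.mul ε (P γ)) * h (TS.inv (P γ)) else 0).Finite :=
    Set.Finite.subset (support_fin hample hTG hTw hP hh.2.2
      (fun γ => f (TS.mul ε (P γ))) _) if_support_subset
  rw [← finsum_add_distrib hfin1 hfin2]
  refine finsum_congr fun γ => ?_
  by_cases hc : TG.r γ = TG.s (q ε)
  · simp [hc, mul_add]
  · simp [hc]

lemma conv_smul_left (hample : TG.IsAmple) (a : R) (f g : S → R)
    (hg : g ∈ twistCarrier (R := R) TG TS i q) :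
    twistConv TG TS q P (a • f) g = a • twistConv TG TS q P f g := by
  funext ε
  rw [Pi.smul_apply, smul_eq_mul, conv_eq_finsum_if, conv_eq_finsum_if]
  have hfin : (support fun γ : G => if TG.r γ = TG.s (q ε)
      then f (TS.mul ε (P γ)) * g (TS.inv (P γ)) else 0).Finite :=
    Set.Finite.subset (support_fin hample hTG hTw hP hg.2.2
      (fun γ => f (TS.mul ε (P γ))) _) if_support_subset
  rw [mul_finsum' _ _ hfin]
  refine finsum_congr fun γ => ?_
  by_cases hc : TG.r γ = TG.s (q ε)
  · simp [hc, mul_assoc]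
  · simp [hc]

lemma conv_smul_right (hample : TG.IsAmple) (a : R) (f g : S → R)
    (hg : g ∈ twistCarrier (R := R) TG TS i q) :
    twistConv TG TS q P f (a • g) = a • twistConv TG TS q P f g := by
  funext ε
  rw [Pi.smul_apply, smul_eq_mul, conv_eq_finsum_if, conv_eq_finsum_if]
  have hfin : (support fun γ : G => if TG.r γ = TG.s (q ε)
      then f (TS.mul ε (P γ)) * g (TS.inv (P γ)) else 0).Finite :=
    Set.Finite.subset (support_fin hample hTG hTw hP hg.2.2
      (fun γ => f (TS.mul ε (P γ))) _) if_support_subset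
  rw [mul_finsum' _ _ hfin]
  refine finsum_congr fun γ => ?_
  by_cases hc : TG.r γ = TG.s (q ε)
  · simp [hc]; ring
  · simp [hc]

lemma star_mem [T2Space G] [DiscreteTopology R] {c : R → R}
    (hc : IsTInverseInvolution Tsub c) {f : S → R}
    (hf : f ∈ twistCarrier (R := R) TG TS i q) :
    twistStar TS c f ∈ twistCarrier (R := R) TG TS i q := by
  have hG := hTG.toIsGroupoid
  obtain ⟨c1, cadd, cmul, cinvol, cz⟩ := hc
  have hc0 : c 0 = 0 := by
    have h00 := cadd 0 0
    rw [add_zero] at h00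
    exact (left_eq_add.1 h00)
  refine ⟨?_, ?_, ?_⟩
  · exact continuous_of_discreteTopology.comp (hf.1.comp hTw.topS.continuous_inv)
  · intro z ε
    show c (f (TS.inv (TS.mul (i (TG.r (q ε)) z) ε))) = _
    rw [tw_inv_act hG hTw z ε, hf.2.1 z⁻¹ (TS.inv ε), cmul]
    have hz : c ((((z⁻¹ : Tsub) : Rˣ)) : R) = ((z : Rˣ) : R) := by
      rw [cz _ (z⁻¹).2]
      norm_cast
    rw [hz]
    rfl
  · have hsub : q '' support (twistStar TS c f)
        ⊆ TG.inv '' closure (q '' support f) := by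
      rintro x ⟨ε, hε, rfl⟩
      have hne : f (TS.inv ε) ≠ 0 := by
        intro h0
        exact hε (by show c (f (TS.inv ε)) = 0; rw [h0, hc0])
      exact ⟨q (TS.inv ε), subset_closure ⟨TS.inv ε, hne, rfl⟩,
        by rw [hTw.q_inv, hG.inv_inv]⟩
    have hcpt : IsCompact (TG.inv '' closure (q '' support f)) :=
      hf.2.2.image hTG.continuous_inv
    exact hcpt.of_isClosed_subset isClosed_closure
      (closure_minimal hsub hcpt.isClosed)

lemma star_conv (hample : TG.IsAmple) [T2Space G] [DiscreteTopology R] {c : R → R}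
    (hc : IsTInverseInvolution Tsub c) {f g : S → R}
    (hf : f ∈ twistCarrier (R := R) TG TS i q)
    (hg : g ∈ twistCarrier (R := R) TG TS i q) :
    twistStar TS c (twistConv TG TS q P f g)
      = twistConv TG TS q P (twistStar TS c g) (twistStar TS c f) := by
  have hG := hTG.toIsGroupoid
  have hS := hTw.topS.toIsGroupoid
  have hstarf := star_mem hTG hTw hP hc hf
  obtain ⟨c1, cadd, cmul, cinvol, cz⟩ := hc
  have hc0 : c 0 = 0 := by
    have h00 := cadd 0 0
    rw [add_zero] at h00
    exact (left_eq_add.1 h00)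
  funext ε
  show c (twistConv TG TS q P f g (TS.inv ε)) = _
  rw [conv_eq_finsum_if (P := P) f g (TS.inv ε), conv_eq_finsum_if]
  have hfinL : (support fun γ : G => if TG.r γ = TG.s (q (TS.inv ε))
      then f (TS.mul (TS.inv ε) (P γ)) * g (TS.inv (P γ)) else 0).Finite :=
    Set.Finite.subset (support_fin hample hTG hTw hP hg.2.2
      (fun γ => f (TS.mul (TS.inv ε) (P γ))) _) if_support_subset
  have hmap : c (∑ᶠ γ : G, (if TG.r γ = TG.s (q (TS.inv ε))
        then f (TS.mul (TS.inv ε) (P γ)) * g (TS.inv (P γ)) else 0))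
      = ∑ᶠ γ : G, c (if TG.r γ = TG.s (q (TS.inv ε))
        then f (TS.mul (TS.inv ε) (P γ)) * g (TS.inv (P γ)) else 0) :=
    AddMonoidHom.map_finsum (AddMonoidHom.mk' c cadd) hfinL
  rw [hmap]
  set Gm : G → R := fun γ => if TG.r γ = TG.s (q (TS.inv ε))
      then c (f (TS.mul (TS.inv ε) (P γ)) * g (TS.inv (P γ))) else 0 with hGmdef
  have hGmeq : ∀ γ : G, c (if TG.r γ = TG.s (q (TS.inv ε))
      then f (TS.mul (TS.inv ε) (P γ)) * g (TS.inv (P γ)) else 0) = Gm γ := by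
    intro γ
    rw [hGmdef]
    simp only
    rw [apply_ite c, hc0]
  rw [finsum_congr hGmeq]
  set F : G → R := fun γ' => if TG.r γ' = TG.s (q ε)
      then (twistStar TS c g) (TS.mul ε (P γ')) * (twistStar TS c f) (TS.inv (P γ')) else 0
      with hFdef
  have hsqinv : TG.s (q (TS.inv ε)) = TG.r (q ε) := tw_sq_inv hG hTw ε
  have hzc1 : ∀ z : Tsub, c (((z : Rˣ)) : R) = (((z : Rˣ)⁻¹ : Rˣ) : R) :=
    fun z => cz _ z.2
  have hzc2 : ∀ z : Tsub, c ((((z⁻¹ : Tsub) : Rˣ)) : R) = ((z : Rˣ) : R) := by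
    intro z
    rw [cz _ (z⁻¹).2]
    norm_cast
  -- termwise computation
  have termEq : ∀ γ', TG.r γ' = TG.s (q ε) → Gm (TG.mul (q ε) γ') = F γ' := by
    intro γ' hcond
    have hcompqγ : TG.comp (q ε) γ' := (hG.comp_iff _ _).2 hcond.symm
    have hrγ : TG.r (TG.mul (q ε) γ') = TG.r (q ε) := hG.r_mul _ _ hcompqγ
    have hcompεP : TS.comp ε (P γ') := (tw_comp_q_iff hG hTw _ _).2
      (by rw [hP.2.1]; exact hcompqγ)
    have hcompinvP : TS.comp (TS.inv ε) (P (TG.mul (q ε) γ')) :=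
      (tw_comp_q_iff hG hTw _ _).2 (by
        rw [hP.2.1, hTw.q_inv]
        exact (hG.comp_iff _ _).2 (by rw [hG.s_inv, hrγ]))
    have hq1 : q (TS.mul (TS.inv ε) (P (TG.mul (q ε) γ'))) = q (P γ') := by
      rw [hTw.q_mul _ _ hcompinvP, hP.2.1, hP.2.1, hTw.q_inv]
      exact hG.inv_mul_cancel_left hcompqγ
    obtain ⟨z, hz⟩ := tw_exists_act hG hTw hq1
    have hfpart : f (TS.mul (TS.inv ε) (P (TG.mul (q ε) γ')))
        = ((z : Rˣ) : R) * f (P γ') := by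
      rw [hz, hf.2.1 z (P γ')]
    have hcompA : TS.comp (TS.inv (P (TG.mul (q ε) γ'))) ε :=
      (tw_comp_q_iff hG hTw _ _).2 (by
        rw [hTw.q_inv, hP.2.1]
        exact (hG.comp_iff _ _).2 (by rw [hG.s_inv, hrγ]))
    have hsr : TS.r ε = TS.s (TS.inv (P (TG.mul (q ε) γ'))) := by
      rw [hS.s_inv, tw_r_eqi hG hTw ε, tw_r_eqi hG hTw (P (TG.mul (q ε) γ')),
        hP.2.1, hrγ]
    have hassoc1 : TS.mul (TS.mul (TS.inv (P (TG.mul (q ε) γ'))) ε) (TS.inv ε)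
        = TS.inv (P (TG.mul (q ε) γ')) := by
      rw [hS.assoc _ _ _ hcompA (hS.comp_inv_right ε),
        show TS.mul ε (TS.inv ε) = TS.r ε from rfl, hsr, hS.mul_s_self]
    have hcomp3 : TS.comp (TS.inv (P γ')) (TS.inv ε) :=
      (tw_comp_q_iff hG hTw _ _).2 (by
        rw [hTw.q_inv, hTw.q_inv, hP.2.1]
        exact (hG.comp_iff _ _).2 (by rw [hG.s_inv, hG.r_inv, hcond]))
    have heq1 : TS.mul (TS.inv (P (TG.mul (q ε) γ'))) ε
        = TS.mul (i (TG.r (q (TS.inv (P γ')))) z⁻¹) (TS.inv (P γ')) := by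
      have hcongr := congrArg TS.inv hz
      rw [hS.inv_mul hcompinvP, hS.inv_inv, tw_inv_act hG hTw z (P γ')] at hcongr
      exact hcongr
    have hPαinv : TS.inv (P (TG.mul (q ε) γ'))
        = TS.mul (i (TG.r (q (TS.mul (TS.inv (P γ')) (TS.inv ε)))) z⁻¹)
            (TS.mul (TS.inv (P γ')) (TS.inv ε)) := by
      rw [← hassoc1, heq1, tw_mul_act_left hG hTw hcomp3 z⁻¹]
    have hgpart : g (TS.inv (P (TG.mul (q ε) γ')))
        = (((z⁻¹ : Tsub) : Rˣ) : R) * g (TS.mul (TS.inv (P γ')) (TS.inv ε)) := by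
      rw [hPαinv]
      exact hg.2.1 z⁻¹ _
    rw [hGmdef, hFdef]
    simp only
    rw [if_pos (by rw [hsqinv]; exact hrγ), if_pos hcond]
    show c _ = c (g (TS.inv (TS.mul ε (P γ')))) * c (f (TS.inv (TS.inv (P γ'))))
    rw [hS.inv_mul hcompεP, hS.inv_inv, hfpart, hgpart, cmul, cmul, cmul,
      hzc1 z, hzc2 z, mul_mul_mul_comm, Units.inv_mul, one_mul, mul_comm]
  -- reindex
  have hFsupp : (support F).Finite := by
    refine Set.Finite.subset (support_fin hample hTG hTw hP hstarf.2.2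
      (fun γ' => (twistStar TS c g) (TS.mul ε (P γ'))) (TG.s (q ε))) ?_
    rw [hFdef]
    exact if_support_subset
  refine (finsum_reindex hFsupp (fun γ' => TG.mul (q ε) γ')
    (fun γ => TG.mul (TG.inv (q ε)) γ) ?_ ?_ ?_ ?_).symm
  · intro γ' hne
    have hcond : TG.r γ' = TG.s (q ε) := by
      by_contra hcn
      exact hne (if_neg hcn)
    exact termEq γ' hcond
  · intro γ' hne
    have hcond : TG.r γ' = TG.s (q ε) := by
      by_contra hcn
      exact hne (if_neg hcn)
    exact hG.inv_mul_cancel_left ((hG.comp_iff _ _).2 hcond.symm)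
  · intro γ hne
    have hcond : TG.r γ = TG.s (q (TS.inv ε)) := by
      by_contra hcn
      exact hne (if_neg hcn)
    have hr : TG.r (q ε) = TG.r γ := by rw [← hsqinv, hcond]
    have hcond' : TG.r (TG.mul (TG.inv (q ε)) γ) = TG.s (q ε) := by
      rw [hG.r_mul _ _ ((hG.comp_iff _ _).2 (by rw [hG.s_inv, hr])), hG.r_inv]
    have h5 := termEq _ hcond'
    rw [hG.mul_inv_cancel_left hr] at h5
    exact h5.symm
  · intro γ hne
    have hcond : TG.r γ = TG.s (q (TS.inv ε)) := by
      by_contra hcn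
      exact hne (if_neg hcn)
    exact hG.mul_inv_cancel_left (by rw [← hsqinv, hcond])

lemma star_star {c : R → R} (hc : IsTInverseInvolution Tsub c) {f : S → R} :
    twistStar TS c (twistStar TS c f) = f := by
  have hS := hTw.topS.toIsGroupoid
  funext ε
  show c (c (f (TS.inv (TS.inv ε)))) = f ε
  rw [hS.inv_inv, hc.2.2.2.1]

lemma star_add {c : R → R} (hc : IsTInverseInvolution Tsub c) (f g : S → R) :
    twistStar TS c (f + g) = twistStar TS c f + twistStar TS c g := by
  funext ε
  show c ((f + g) (TS.inv ε)) = _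
  rw [Pi.add_apply, hc.2.1]
  rfl

lemma star_smul {c : R → R} (hc : IsTInverseInvolution Tsub c) (a : R) (f : S → R) :
    twistStar TS c (a • f) = c a • twistStar TS c f := by
  funext ε
  show c ((a • f) (TS.inv ε)) = (c a • twistStar TS c f) ε
  rw [Pi.smul_apply, Pi.smul_apply, smul_eq_mul, smul_eq_mul, hc.2.2.1]
  rfl

end PartsAux
/-- For an ample Hausdorff groupoid `G` and a topologically
trivial discrete twist `(Σ, i, q)` by `Tsub ≤ Rˣ` over `G` (with continuous
global section `P`), the convolution
`(f *_Σ g)(ε) = ∑_{γ ∈ G^{s(q(ε))}} f(ε P(γ)) g(P(γ)⁻¹)` is well defined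
(independent of the choice of section, with finitely many nonzero
summands) and makes `A_R(G; Σ)` an `R`-algebra; if `R` has a `T`-inverse
involution `c`, then `f*(ε) = c (f (ε⁻¹))` makes `A_R(G; Σ)` a `*`-algebra
over `R`. -/
theorem twistSteinbergAlgebra_isAlgebra
    {G S R : Type*} [TopologicalSpace G] [TopologicalSpace S]
    [T2Space G] [LocallyCompactSpace G]
    [CommRing R] [TopologicalSpace R] [DiscreteTopology R]
    (TG : GroupoidStruct G) (hTG : TG.IsTopGroupoid) (hample : TG.IsAmple)
    (TS : GroupoidStruct S) (Tsub : Subgroup Rˣ)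
    (i : G → Tsub → S) (q : S → G)
    (hTw : IsDiscreteTwist TG TS Tsub i q)
    (P : G → S) (hP : IsGlobalSection TG TS q P) :
    -- the convolution is independent of the choice of continuous global section
    (∀ P' : G → S, IsGlobalSection TG TS q P' →
      ∀ f g, f ∈ twistCarrier (R := R) TG TS i q →
        g ∈ twistCarrier (R := R) TG TS i q →
        twistConv TG TS q P f g = twistConv TG TS q P' f g)
    -- the defining sum has finitely many nonzero summands
    ∧ (∀ f g, f ∈ twistCarrier (R := R) TG TS i q →
        g ∈ twistCarrier (R := R) TG TS i q → ∀ ε : S,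
        {γ : G | TG.r γ = TG.s (q ε)
          ∧ f (TS.mul ε (P γ)) * g (TS.inv (P γ)) ≠ 0}.Finite)
    -- `A_R(G; Σ)` is closed under the convolution
    ∧ (∀ f g, f ∈ twistCarrier (R := R) TG TS i q →
        g ∈ twistCarrier (R := R) TG TS i q →
        twistConv TG TS q P f g ∈ twistCarrier (R := R) TG TS i q)
    -- the convolution is associative
    ∧ (∀ f g h, f ∈ twistCarrier (R := R) TG TS i q →
        g ∈ twistCarrier (R := R) TG TS i q →
        h ∈ twistCarrier (R := R) TG TS i q →
        twistConv TG TS q P (twistConv TG TS q P f g) h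
          = twistConv TG TS q P f (twistConv TG TS q P g h))
    -- biadditive
    ∧ (∀ f g h, f ∈ twistCarrier (R := R) TG TS i q →
        g ∈ twistCarrier (R := R) TG TS i q →
        h ∈ twistCarrier (R := R) TG TS i q →
        twistConv TG TS q P (f + g) h
            = twistConv TG TS q P f h + twistConv TG TS q P g h
          ∧ twistConv TG TS q P f (g + h)
            = twistConv TG TS q P f g + twistConv TG TS q P f h)
    -- and `R`-bilinear
    ∧ (∀ (a : R) (f g : S → R), f ∈ twistCarrier (R := R) TG TS i q →
        g ∈ twistCarrier (R := R) TG TS i q →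
        twistConv TG TS q P (a • f) g = a • twistConv TG TS q P f g
          ∧ twistConv TG TS q P f (a • g) = a • twistConv TG TS q P f g)
    -- if `R` has a `T`-inverse involution, `A_R(G; Σ)` is a `*`-algebra
    ∧ (∀ c : R → R, IsTInverseInvolution Tsub c →
        (∀ f, f ∈ twistCarrier (R := R) TG TS i q →
            twistStar TS c f ∈ twistCarrier (R := R) TG TS i q)
        ∧ (∀ f g, f ∈ twistCarrier (R := R) TG TS i q →
            g ∈ twistCarrier (R := R) TG TS i q →
            twistStar TS c (twistConv TG TS q P f g)
              = twistConv TG TS q P (twistStar TS c g) (twistStar TS c f))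
        ∧ (∀ f, f ∈ twistCarrier (R := R) TG TS i q →
            twistStar TS c (twistStar TS c f) = f)
        ∧ (∀ f g : S → R,
            twistStar TS c (f + g) = twistStar TS c f + twistStar TS c g)
        ∧ (∀ (a : R) (f : S → R),
            twistStar TS c (a • f) = c a • twistStar TS c f)) := by
  refine ⟨?_, ?_, ?_, ?_, ?_, ?_, ?_⟩
  · exact fun P' hP' f g hf hg => part_indep hTG hTw hP P' hP' f g hf hg
  · exact fun f g hf hg ε => part_finite hTG hTw hP hample f g hg ε
  · exact fun f g hf hg => ⟨conv_continuous hTG hTw hP hample hf hg,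
      fun z ε => conv_equivariant hTG hTw hP hample hf hg z ε,
      conv_support_compact hTG hTw hP hf hg⟩
  · exact fun f g h hf hg hh => conv_assoc hTG hTw hP hample hf hg hh
  · exact fun f g h hf hg hh => ⟨conv_add_left hTG hTw hP hample f g h hh,
      conv_add_right hTG hTw hP hample f g h hg hh⟩
  · exact fun a f g hf hg => ⟨conv_smul_left hTG hTw hP hample a f g hg,
      conv_smul_right hTG hTw hP hample a f g hg⟩
  · exact fun c hc => ⟨fun f hf => star_mem hTG hTw hP hc hf,
      fun f g hf hg => star_conv hTG hTw hP hample hc hf hg,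
      fun f hf => star_star hTG hTw hP hc,
      fun f g => star_add hTG hTw hP hc f g,
      fun a f => star_smul hTG hTw hP hc a f⟩
end TwistedSteinberg
end

section
/- Let G be an ample Hausdorff groupoid, let Σ be a topologically trivial discrete twist by T ≤ R^× over G, let P : G → Σ be a continuous global section, and let σ : G^(2) → T be the continuous 2-cocycle induced by P. Then the map Ψ(f) = f ∘ P is an R-algebra isomorphism from A_R(G;Σ) onto A_R(G,σ^{-1}), where σ^{-1} is the 2-cocycle (α,β) ↦ σ(α,β)^{-1}. If R has a T-inverse involution, then Ψ is a *-isomorphism. -/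
/-!
Common definitions: topological groupoids, bisections, étale/ample groupoids,
continuous `Rˣ`-valued 2-cocycles, and twisted Steinberg algebras.

A groupoid is modelled as a type `G` together with a composability predicate
`comp`, a (partial, junk-valued off composable pairs) multiplication `mul`,
and an inversion `inv`.  The range and source maps are `r γ = γ γ⁻¹` and
`s γ = γ⁻¹ γ`, and the unit space is the set of fixed points of `r`.
-/

namespace TwistedSteinberg

open GroupoidStruct

section Aux

variable {G : Type*} {T : GroupoidStruct G}

theorem aux_comp_self_inv (K : T.IsGroupoid) (a : G) : T.comp a (T.inv a) :=
  (K.comp_iff _ _).2 (K.r_inv a).symm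

theorem aux_comp_inv_self (K : T.IsGroupoid) (a : G) : T.comp (T.inv a) a :=
  (K.comp_iff _ _).2 (K.s_inv a)

theorem aux_mul_mul_inv (K : T.IsGroupoid) {x b : G} (hx : T.comp x b) :
    T.mul (T.mul x b) (T.inv b) = x := by
  rw [K.assoc x b (T.inv b) hx (aux_comp_self_inv K b)]
  show T.mul x (T.r b) = x
  rw [← (K.comp_iff x b).1 hx]
  exact K.mul_s_self x

theorem aux_cancel_right (K : T.IsGroupoid) {a a' b : G} (ha : T.comp a b)
    (ha' : T.comp a' b) (h : T.mul a b = T.mul a' b) : a = a' := by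
  rw [← aux_mul_mul_inv K ha, h, aux_mul_mul_inv K ha']

end Aux

/-- Let `(Σ, i, q)` be a topologically trivial discrete
twist by `Tsub ≤ Rˣ` over an ample Hausdorff groupoid `G`, let `P` be a
continuous global section, and let `σ` be the continuous 2-cocycle induced
by `P`.  Then `Ψ(f) = f ∘ P` is an `R`-algebra isomorphism from `A_R(G; Σ)`
onto `A_R(G, σ⁻¹)`, where `σ⁻¹ : (α,β) ↦ σ(α,β)⁻¹`; if `R` has a
`T`-inverse involution, then `Ψ` is a `*`-isomorphism. -/
theorem twistSteinbergAlgebra_iso_cocycleSteinbergAlgebra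
    {G S R : Type*} [TopologicalSpace G] [TopologicalSpace S]
    [T2Space G] [LocallyCompactSpace G]
    [CommRing R] [TopologicalSpace R] [DiscreteTopology R]
    (TG : GroupoidStruct G) (hTG : TG.IsTopGroupoid) (hample : TG.IsAmple)
    (TS : GroupoidStruct S) (Tsub : Subgroup Rˣ)
    (i : G → Tsub → S) (q : S → G)
    (hTw : IsDiscreteTwist TG TS Tsub i q)
    (P : G → S) (hP : IsGlobalSection TG TS q P)
    (σ : G → G → Tsub) (hσ : IsCocycleSub (R := R) TG Tsub σ)
    (hind : InducesCocycle TG TS i P σ) :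
    -- `Ψ` maps `A_R(G; Σ)` into `A_R(G, σ⁻¹)`
    (∀ f, f ∈ twistCarrier (R := R) TG TS i q → f ∘ P ∈ steinbergCarrier G R)
    -- `Ψ` is a bijection of `A_R(G; Σ)` onto `A_R(G, σ⁻¹)`
    ∧ Set.BijOn (fun f : S → R => f ∘ P)
        (twistCarrier (R := R) TG TS i q) (steinbergCarrier G R)
    -- `Ψ` is `R`-linear
    ∧ (∀ f g : S → R, (f + g) ∘ P = f ∘ P + g ∘ P)
    ∧ (∀ (a : R) (f : S → R), (a • f) ∘ P = a • (f ∘ P))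
    -- `Ψ` intertwines the convolution on `A_R(G; Σ)` with the `σ⁻¹`-twisted
    -- convolution on `A_R(G, σ⁻¹)`
    ∧ (∀ f g, f ∈ twistCarrier (R := R) TG TS i q →
        g ∈ twistCarrier (R := R) TG TS i q →
        (twistConv TG TS q P f g) ∘ P
          = conv TG (fun a b => (((σ a b)⁻¹ : Tsub) : Rˣ)) (f ∘ P) (g ∘ P))
    -- if `R` has a `T`-inverse involution, `Ψ` is a `*`-isomorphism
    ∧ (∀ c : R → R, IsTInverseInvolution Tsub c →
        ∀ f, f ∈ twistCarrier (R := R) TG TS i q →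
          (twistStar TS c f) ∘ P
            = convStar TG (fun a b => (((σ a b)⁻¹ : Tsub) : Rˣ)) c (f ∘ P)) := by
  classical
  haveI : ContinuousMul R := ⟨continuous_of_discreteTopology⟩
  obtain ⟨hPcont, hqP, hPu⟩ := hP
  have KG := hTG.toIsGroupoid
  have KS := hTw.topS.toIsGroupoid
  -- `q` intertwines source and range maps
  have hq_s : ∀ ε : S, q (TS.s ε) = TG.s (q ε) := by
    intro ε
    show q (TS.mul (TS.inv ε) ε) = _
    rw [hTw.q_mul _ _ (aux_comp_inv_self KS ε), hTw.q_inv]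
    rfl
  have hq_r : ∀ ε : S, q (TS.r ε) = TG.r (q ε) := by
    intro ε
    show q (TS.mul ε (TS.inv ε)) = _
    rw [hTw.q_mul _ _ (aux_comp_self_inv KS ε), hTw.q_inv]
    rfl
  -- `P` on units
  have hPunit : ∀ x ∈ TG.unitSpace, P x = i x 1 := by
    intro x hx
    have h1 := hTw.i_q_unit (P x) (hPu x hx)
    rw [hqP] at h1
    exact h1.symm
  have hsP : ∀ γ : G, TS.s (P γ) = i (TG.s γ) 1 := by
    intro γ
    have h1 := hTw.i_q_unit _ (KS.s_unit (P γ))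
    rw [hq_s, hqP] at h1
    exact h1.symm
  have hrP : ∀ γ : G, TS.r (P γ) = i (TG.r γ) 1 := by
    intro γ
    have h1 := hTw.i_q_unit _ (KS.r_unit (P γ))
    rw [hq_r, hqP] at h1
    exact h1.symm
  have hcompPP : ∀ α β, TG.comp α β → TS.comp (P α) (P β) := by
    intro α β h
    exact (KS.comp_iff _ _).2 (by rw [hsP, hrP, (KG.comp_iff α β).1 h])
  -- q of a "twisted" element
  have hqΦ : ∀ (γ : G) (w : Tsub), q (TS.mul (i (TG.r γ) w) (P γ)) = γ := by
    intro γ w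
    have hc : TS.comp (i (TG.r (q (P γ))) w) (P γ) := hTw.central_comp_left (P γ) w
    rw [hqP] at hc
    rw [hTw.q_mul _ _ hc, hTw.q_i _ (KG.r_unit γ), hqP]
    exact KG.r_mul_self γ
  -- fibre decomposition
  have hA : ∀ ε : S, ∃ z : Tsub, ε = TS.mul (i (TG.r (q ε)) z) (P (q ε)) := by
    intro ε
    have h1 := hTw.i_q_unit _ (KS.s_unit ε)
    rw [hq_s] at h1
    have h2 := hTw.i_q_unit _ (KS.s_unit (P (q ε)))
    rw [hq_s, hqP] at h2
    have hsε : TS.s ε = TS.s (P (q ε)) := h1.symm.trans h2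
    have hcomp1 : TS.comp ε (TS.inv (P (q ε))) :=
      (KS.comp_iff _ _).2 (by rw [KS.r_inv]; exact hsε)
    have hδq : q (TS.mul ε (TS.inv (P (q ε)))) = TG.r (q ε) := by
      rw [hTw.q_mul _ _ hcomp1, hTw.q_inv, hqP]
      rfl
    obtain ⟨z, hz⟩ := (hTw.exact_fibre _ (KG.r_unit (q ε)) _).1 hδq
    refine ⟨z, ?_⟩
    rw [← hz, KS.assoc _ _ _ hcomp1 (aux_comp_inv_self KS _)]
    show ε = TS.mul ε (TS.s (P (q ε)))
    rw [← hsε]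
    exact (KS.mul_s_self ε).symm
  -- uniqueness of the fibre coordinate
  have hB' : ∀ (γ : G) (w w' : Tsub),
      TS.mul (i (TG.r γ) w) (P γ) = TS.mul (i (TG.r γ) w') (P γ) → w = w' := by
    intro γ w w' hEq
    have hc : ∀ u : Tsub, TS.comp (i (TG.r γ) u) (P γ) := by
      intro u
      have := hTw.central_comp_left (P γ) u
      rwa [hqP] at this
    have h2 := aux_cancel_right KS (hc w) (hc w') hEq
    exact (hTw.i_injective _ (KG.r_unit γ) _ (KG.r_unit γ) w w' h2).2
  -- collapsing two `i`-factors
  have hF : ∀ x, x ∈ TG.unitSpace → ∀ ε : S, TG.r (q ε) = x → ∀ u w : Tsub,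
      TS.mul (i x u) (TS.mul (i x w) ε) = TS.mul (i x (u * w)) ε := by
    intro x hx ε hε u w
    have h1 : TS.comp (i x u) (i x w) := hTw.i_comp x hx u w
    have h2 : TS.comp (i x w) ε := by
      have := hTw.central_comp_left ε w
      rwa [hε] at this
    rw [← KS.assoc _ _ _ h1 h2, hTw.i_mul x hx]
  -- the key multiplication formula
  have keymul : ∀ α β, TG.comp α β →
      TS.mul (P α) (P β) = TS.mul (i (TG.r α) (σ α β)) (P (TG.mul α β)) := by
    intro α β hc
    have hPP : TS.comp (P α) (P β) := hcompPP α β hc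
    have hind' := hind α β hc
    have hcompM : TS.comp (TS.mul (P α) (P β)) (TS.inv (P (TG.mul α β))) := by
      apply (KS.comp_iff _ _).2
      rw [KS.s_mul _ _ hPP, KS.r_inv, hsP, hsP, KG.s_mul α β hc]
    have h3 := congrArg (fun t => TS.mul t (P (TG.mul α β))) hind'
    rw [KS.assoc _ _ _ hcompM (aux_comp_inv_self KS _)] at h3
    have hs2 : TS.s (P (TG.mul α β)) = TS.s (TS.mul (P α) (P β)) := by
      rw [KS.s_mul _ _ hPP, hsP, hsP, KG.s_mul α β hc]
    rw [show TS.mul (TS.inv (P (TG.mul α β))) (P (TG.mul α β))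
        = TS.s (P (TG.mul α β)) from rfl, hs2, KS.mul_s_self] at h3
    exact h3
  have keyE4 : ∀ β' : G,
      TS.mul (P β') (P (TG.inv β')) = i (TG.r β') (σ β' (TG.inv β')) := by
    intro β'
    rw [keymul β' (TG.inv β') (aux_comp_self_inv KG β')]
    show TS.mul (i (TG.r β') (σ β' (TG.inv β'))) (P (TG.r β')) = _
    rw [hPunit _ (KG.r_unit β'), hTw.i_mul _ (KG.r_unit β'), mul_one]
  have keyinv : ∀ β' : G, P (TG.inv β')
      = TS.mul (i (TG.r (q (TS.inv (P β')))) (σ β' (TG.inv β'))) (TS.inv (P β')) := by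
    intro β'
    have h1 : TS.comp (P β') (P (TG.inv β')) := hcompPP _ _ (aux_comp_self_inv KG β')
    have step : TS.mul (TS.inv (P β')) (TS.mul (P β') (P (TG.inv β')))
        = P (TG.inv β') := by
      rw [← KS.assoc _ _ _ (aux_comp_inv_self KS (P β')) h1]
      show TS.mul (TS.s (P β')) (P (TG.inv β')) = _
      rw [hsP, ← KG.r_inv β', ← hrP (TG.inv β')]
      exact KS.r_mul_self _
    rw [← step, keyE4 β']
    have hcentral := hTw.central (TS.inv (P β')) (σ β' (TG.inv β'))
    have hsq : TG.s (q (TS.inv (P β'))) = TG.r β' := by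
      rw [hTw.q_inv, hqP, KG.s_inv]
    rw [hsq] at hcentral
    exact hcentral.symm
  -- Part 1: Ψ maps into the Steinberg carrier
  have hmaps : ∀ f, f ∈ twistCarrier (R := R) TG TS i q → f ∘ P ∈ steinbergCarrier G R := by
    intro f hf
    refine ⟨(IsLocallyConstant.iff_continuous _).2 (hf.1.comp hPcont), ?_⟩
    have hsub : Function.support (f ∘ P) ⊆ closure (q '' Function.support f) := by
      intro γ hγ
      exact subset_closure ⟨P γ, hγ, hqP γ⟩
    have hclosed : IsClosed (Function.support (f ∘ P)) := by
      rw [Function.support_eq_preimage]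
      exact (isClosed_discrete _).preimage (hf.1.comp hPcont)
    exact hf.2.2.of_isClosed_subset hclosed hsub
  -- injectivity on the twisted carrier
  have hinj : Set.InjOn (fun f : S → R => f ∘ P) (twistCarrier (R := R) TG TS i q) := by
    intro f hf g hg hfg
    funext ε
    obtain ⟨z, hz⟩ := hA ε
    have h1 : f ε = ((z : Rˣ) : R) * f (P (q ε)) := by
      conv_lhs => rw [hz]
      have := hf.2.1 z (P (q ε))
      rwa [hqP] at this
    have h2 : g ε = ((z : Rˣ) : R) * g (P (q ε)) := by
      conv_lhs => rw [hz]
      have := hg.2.1 z (P (q ε))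
      rwa [hqP] at this
    rw [h1, h2]
    have := congrFun hfg (q ε)
    simp only [Function.comp_apply] at this
    rw [this]
  -- surjectivity onto the Steinberg carrier
  choose zz hzz using hA
  have hzΦ : ∀ (γ : G) (w : Tsub), zz (TS.mul (i (TG.r γ) w) (P γ)) = w := by
    intro γ w
    have h2 := hzz (TS.mul (i (TG.r γ) w) (P γ))
    rw [hqΦ γ w] at h2
    exact hB' γ _ w h2.symm
  have hsurj : Set.SurjOn (fun f : S → R => f ∘ P)
      (twistCarrier (R := R) TG TS i q) (steinbergCarrier G R) := by
    intro h hh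
    set f : S → R := fun ε => ((zz ε : Rˣ) : R) * h (q ε) with hfdef
    have hfΦ : ∀ (γ : G) (w : Tsub),
        f (TS.mul (i (TG.r γ) w) (P γ)) = ((w : Rˣ) : R) * h γ := by
      intro γ w
      show ((zz _ : Rˣ) : R) * h (q _) = _
      rw [hzΦ γ w, hqΦ γ w]
    have hfP : f ∘ P = h := by
      funext γ
      show f (P γ) = h γ
      have hPγ : P γ = TS.mul (i (TG.r γ) 1) (P γ) := by
        rw [← hrP γ]
        exact (KS.r_mul_self _).symm
      conv_lhs => rw [hPγ]
      rw [hfΦ]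
      simp
    -- equivariance of f
    have hequi : ∀ (w : Tsub) (ε : S),
        f (TS.mul (i (TG.r (q ε)) w) ε) = ((w : Rˣ) : R) * f ε := by
      have main : ∀ (γ : G) (u w : Tsub),
          f (TS.mul (i (TG.r γ) w) (TS.mul (i (TG.r γ) u) (P γ)))
            = ((w : Rˣ) : R) * f (TS.mul (i (TG.r γ) u) (P γ)) := by
        intro γ u w
        rw [hF (TG.r γ) (KG.r_unit γ) (P γ) (by rw [hqP]) w u, hfΦ, hfΦ]
        push_cast
        ring
      intro w ε
      calc f (TS.mul (i (TG.r (q ε)) w) ε)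
          = f (TS.mul (i (TG.r (q ε)) w)
              (TS.mul (i (TG.r (q ε)) (zz ε)) (P (q ε)))) := by
            exact congrArg (fun t => f (TS.mul (i (TG.r (q ε)) w) t)) (hzz ε)
        _ = ((w : Rˣ) : R) * f (TS.mul (i (TG.r (q ε)) (zz ε)) (P (q ε))) :=
            main (q ε) (zz ε) w
        _ = ((w : Rˣ) : R) * f ε := by
            exact congrArg (fun t => ((w : Rˣ) : R) * f t) (hzz ε).symm
    -- continuity of f
    have hcont : Continuous f := by
      rw [continuous_iff_continuousAt]
      intro ε₀
      haveI : Nonempty (G × Tsub) := ⟨(q ε₀, 1)⟩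
      obtain ⟨B, hmemB, hBopen, -, PB, hPBc, hPBq, hbijB, hΦBc, hΦBopen⟩ :=
        hTw.locally_trivial (q ε₀)
      set ΦB : G × Tsub → S := fun p => TS.mul (i (TG.r p.1) p.2) (PB p.1) with hΦBdef
      have hUopen : IsOpen (q ⁻¹' B) := (hTw.q_quotient B).1 hBopen
      have hqΦB : ∀ p : G × Tsub, p.1 ∈ B → q (ΦB p) = p.1 := by
        intro p hp
        have hc : TS.comp (i (TG.r (q (PB p.1))) p.2) (PB p.1) :=
          hTw.central_comp_left _ _
        rw [hPBq _ hp] at hc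
        show q (TS.mul (i (TG.r p.1) p.2) (PB p.1)) = p.1
        rw [hTw.q_mul _ _ hc, hTw.q_i _ (KG.r_unit p.1), hPBq _ hp]
        exact KG.r_mul_self p.1
      set wB : S → Tsub :=
        fun ε => (Function.invFunOn ΦB (B ×ˢ (Set.univ : Set Tsub)) ε).2 with hwBdef
      have hinvOn : ∀ ε ∈ q ⁻¹' B,
          Function.invFunOn ΦB (B ×ˢ (Set.univ : Set Tsub)) ε
            ∈ B ×ˢ (Set.univ : Set Tsub)
          ∧ ΦB (Function.invFunOn ΦB (B ×ˢ (Set.univ : Set Tsub)) ε) = ε := by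
        intro ε hε
        obtain ⟨p, hp, hpe⟩ := hbijB.surjOn hε
        exact ⟨Function.invFunOn_mem ⟨p, hp, hpe⟩, Function.invFunOn_eq ⟨p, hp, hpe⟩⟩
      have hfst : ∀ ε ∈ q ⁻¹' B, ε = ΦB (q ε, wB ε) := by
        intro ε hε
        obtain ⟨hmem, heq⟩ := hinvOn ε hε
        have h1 := hqΦB _ hmem.1
        rw [heq] at h1
        have h2 : (q ε, wB ε) = Function.invFunOn ΦB (B ×ˢ (Set.univ : Set Tsub)) ε :=
          Prod.ext_iff.2 ⟨h1, rfl⟩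
        rw [h2, heq]
      have hconstw : ∀ (w : Tsub) (ε : S), ε ∈ q ⁻¹' B →
          ε ∈ ΦB '' (B ×ˢ ({w} : Set Tsub)) → wB ε = w := by
        rintro w ε hε ⟨p, hp, hpe⟩
        obtain ⟨hmem, heq⟩ := hinvOn ε hε
        have hpB : p ∈ B ×ˢ (Set.univ : Set Tsub) := ⟨hp.1, trivial⟩
        have hpp := hbijB.injOn hpB hmem (by rw [hpe, heq])
        have hw : wB ε = p.2 := by
          show (Function.invFunOn ΦB (B ×ˢ (Set.univ : Set Tsub)) ε).2 = p.2
          rw [← hpp]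
        rw [hw]
        exact hp.2
      have hslice : ∀ w : Tsub, IsOpen (ΦB '' (B ×ˢ ({w} : Set Tsub))) := by
        intro w
        exact hΦBopen _ (Set.prod_mono_right (Set.subset_univ _))
          (hBopen.prod (isOpen_discrete _))
      have hε₀mem : ε₀ ∈ q ⁻¹' B := hmemB
      have hev1 : ∀ᶠ ε in nhds ε₀, wB ε = wB ε₀ := by
        have hopen : IsOpen (q ⁻¹' B ∩ ΦB '' (B ×ˢ ({wB ε₀} : Set Tsub))) :=
          hUopen.inter (hslice _)
        have hmem0 : ε₀ ∈ q ⁻¹' B ∩ ΦB '' (B ×ˢ ({wB ε₀} : Set Tsub)) :=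
          ⟨hε₀mem, ⟨(q ε₀, wB ε₀), ⟨hmemB, rfl⟩, (hfst ε₀ hε₀mem).symm⟩⟩
        filter_upwards [hopen.mem_nhds hmem0] with ε hε
        exact hconstw _ ε hε.1 hε.2
      have hev2 : ∀ᶠ ε in nhds ε₀, wB (P (q ε)) = wB (P (q ε₀)) := by
        have hcontPq : Continuous (fun ε : S => P (q ε)) :=
          hPcont.comp hTw.q_continuous
        have hopen2 : IsOpen ((fun ε : S => P (q ε)) ⁻¹'
            (q ⁻¹' B ∩ ΦB '' (B ×ˢ ({wB (P (q ε₀))} : Set Tsub)))) :=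
          (hUopen.inter (hslice _)).preimage hcontPq
        have hP0B : P (q ε₀) ∈ q ⁻¹' B := by
          show q (P (q ε₀)) ∈ B
          rw [hqP]
          exact hmemB
        have hmem0 : ε₀ ∈ (fun ε : S => P (q ε)) ⁻¹'
            (q ⁻¹' B ∩ ΦB '' (B ×ˢ ({wB (P (q ε₀))} : Set Tsub))) := by
          refine ⟨hP0B, ⟨(q (P (q ε₀)), wB (P (q ε₀))), ⟨?_, rfl⟩, (hfst _ hP0B).symm⟩⟩
          rw [hqP]
          exact hmemB
        filter_upwards [hopen2.mem_nhds hmem0] with ε hε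
        exact hconstw _ _ hε.1 hε.2
      have hzid : ∀ ε ∈ q ⁻¹' B, zz ε = wB ε * (wB (P (q ε)))⁻¹ := by
        intro ε hε
        have hγB : q ε ∈ B := hε
        have hPB' : P (q ε) ∈ q ⁻¹' B := by
          show q (P (q ε)) ∈ B
          rw [hqP]
          exact hγB
        have hPeq := hfst _ hPB'
        rw [hqP] at hPeq
        have hkey : ∀ w : Tsub, TS.mul (i (TG.r (q ε)) w) (P (q ε))
            = ΦB (q ε, w * wB (P (q ε))) := by
          intro w
          conv_lhs => rw [hPeq]
          show TS.mul (i (TG.r (q ε)) w)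
              (TS.mul (i (TG.r (q ε)) (wB (P (q ε)))) (PB (q ε)))
            = TS.mul (i (TG.r (q ε)) (w * wB (P (q ε)))) (PB (q ε))
          exact hF (TG.r (q ε)) (KG.r_unit _) (PB (q ε)) (by rw [hPBq _ hγB]) w _
        have h1 : TS.mul (i (TG.r (q ε)) (wB ε * (wB (P (q ε)))⁻¹)) (P (q ε)) = ε := by
          rw [hkey, inv_mul_cancel_right]
          exact (hfst ε hε).symm
        exact hB' (q ε) _ _ ((hzz ε).symm.trans h1.symm)
      have hfloc : f =ᶠ[nhds ε₀]
          fun ε => ((wB ε : Rˣ) : R) * (((wB (P (q ε)))⁻¹ : Tsub) : Rˣ) * h (q ε) := by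
        filter_upwards [hUopen.mem_nhds hε₀mem] with ε hε
        show ((zz ε : Rˣ) : R) * h (q ε) = _
        rw [hzid ε hε]
        push_cast
        ring
      refine ContinuousAt.congr ?_ hfloc.symm
      have he1 : (fun ε : S => ((wB ε : Rˣ) : R))
          =ᶠ[nhds ε₀] fun _ => ((wB ε₀ : Rˣ) : R) :=
        hev1.mono fun ε hε => by simp only [hε]
      have he2 : (fun ε : S => ((((wB (P (q ε)))⁻¹ : Tsub) : Rˣ) : R))
          =ᶠ[nhds ε₀] fun _ => ((((wB (P (q ε₀)))⁻¹ : Tsub) : Rˣ) : R) :=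
        hev2.mono fun ε hε => by simp only [hε]
      have hc1 : ContinuousAt (fun ε : S => ((wB ε : Rˣ) : R)) ε₀ :=
        Filter.EventuallyEq.continuousAt he1
      have hc2 : ContinuousAt
          (fun ε : S => ((((wB (P (q ε)))⁻¹ : Tsub) : Rˣ) : R)) ε₀ :=
        Filter.EventuallyEq.continuousAt he2
      have hc3 : ContinuousAt (fun ε : S => h (q ε)) ε₀ :=
        (hh.1.continuous.comp hTw.q_continuous).continuousAt
      exact (hc1.mul hc2).mul hc3
    -- compact support of f
    have hcs : IsCompact (closure (q '' Function.support f)) := by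
      have hsupp : q '' Function.support f ⊆ Function.support h := by
        rintro γ ⟨ε, hε, rfl⟩
        intro h0
        apply hε
        show ((zz ε : Rˣ) : R) * h (q ε) = 0
        rw [h0, mul_zero]
      have hhclosed : IsClosed (Function.support h) := by
        rw [Function.support_eq_preimage]
        exact (isClosed_discrete _).preimage hh.1.continuous
      exact hh.2.of_isClosed_subset isClosed_closure (closure_minimal hsupp hhclosed)
    exact ⟨f, ⟨hcont, hequi, hcs⟩, hfP⟩
  -- equivariance consequences for carrier elements
  have hE2 : ∀ (g : S → R), g ∈ twistCarrier (R := R) TG TS i q → ∀ γ' : G,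
      g (TS.inv (P γ')) = ((((σ γ' (TG.inv γ'))⁻¹ : Tsub) : Rˣ) : R) * g (P (TG.inv γ')) := by
    intro g hg γ'
    have h1 : g (P (TG.inv γ'))
        = (((σ γ' (TG.inv γ') : Tsub) : Rˣ) : R) * g (TS.inv (P γ')) := by
      rw [keyinv γ']
      exact hg.2.1 _ _
    rw [h1, ← mul_assoc]
    have hone : ((((σ γ' (TG.inv γ'))⁻¹ : Tsub) : Rˣ) : R)
        * (((σ γ' (TG.inv γ') : Tsub) : Rˣ) : R) = 1 := by
      push_cast
      rw [← Units.val_mul, inv_mul_cancel, Units.val_one]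
    rw [hone, one_mul]
  -- the convolution is intertwined
  have hconv : ∀ f g, f ∈ twistCarrier (R := R) TG TS i q →
      g ∈ twistCarrier (R := R) TG TS i q →
      (twistConv TG TS q P f g) ∘ P
        = conv TG (fun a b => (((σ a b)⁻¹ : Tsub) : Rˣ)) (f ∘ P) (g ∘ P) := by
    intro f g hf hg
    funext γ₀
    show twistConv TG TS q P f g (P γ₀)
      = conv TG (fun a b => (((σ a b)⁻¹ : Tsub) : Rˣ)) (f ∘ P) (g ∘ P) γ₀
    unfold twistConv conv
    rw [hqP γ₀]
    show ∑ᶠ γ' ∈ {γ' : G | TG.r γ' = TG.s γ₀},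
        f (TS.mul (P γ₀) (P γ')) * g (TS.inv (P γ'))
      = ∑ᶠ p ∈ {p : G × G | TG.comp p.1 p.2 ∧ TG.mul p.1 p.2 = γ₀},
        ((((σ p.1 p.2)⁻¹ : Tsub) : Rˣ) : R) * (f ∘ P) p.1 * (g ∘ P) p.2
    refine finsum_mem_eq_of_bijOn (fun γ' => (TG.mul γ₀ γ', TG.inv γ'))
      ⟨?_, ?_, ?_⟩ ?_
    · -- maps to
      intro γ' hγ'
      have hγ'' : TG.r γ' = TG.s γ₀ := hγ'
      have hcγ : TG.comp γ₀ γ' := (KG.comp_iff _ _).2 hγ''.symm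
      refine ⟨(KG.comp_iff _ _).2 (by rw [KG.s_mul _ _ hcγ, KG.r_inv]), ?_⟩
      rw [KG.assoc γ₀ γ' (TG.inv γ') hcγ (aux_comp_self_inv KG γ')]
      show TG.mul γ₀ (TG.r γ') = γ₀
      rw [hγ'']
      exact KG.mul_s_self γ₀
    · -- injective
      intro a _ b _ hab
      have h2 : TG.inv a = TG.inv b := congrArg Prod.snd hab
      rw [← KG.inv_inv a, h2, KG.inv_inv]
    · -- surjective
      rintro p ⟨hp1, hp2⟩
      refine ⟨TG.inv p.2, ?_, ?_⟩
      · show TG.r (TG.inv p.2) = TG.s γ₀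
        rw [KG.r_inv, ← hp2, KG.s_mul _ _ hp1]
      · have hfstp : TG.mul γ₀ (TG.inv p.2) = p.1 := by
          rw [← hp2]
          exact aux_mul_mul_inv KG hp1
        exact Prod.ext_iff.2 ⟨hfstp, KG.inv_inv p.2⟩
    · -- term equality
      intro γ' hγ'
      have hγ'' : TG.r γ' = TG.s γ₀ := hγ'
      have hcγ : TG.comp γ₀ γ' := (KG.comp_iff _ _).2 hγ''.symm
      have E1 : f (TS.mul (P γ₀) (P γ'))
          = (((σ γ₀ γ' : Tsub) : Rˣ) : R) * f (P (TG.mul γ₀ γ')) := by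
        rw [keymul γ₀ γ' hcγ]
        have hr : TG.r γ₀ = TG.r (q (P (TG.mul γ₀ γ'))) := by
          rw [hqP, KG.r_mul _ _ hcγ]
        rw [hr]
        exact hf.2.1 (σ γ₀ γ') (P (TG.mul γ₀ γ'))
      have E3 : (σ (TG.mul γ₀ γ') (TG.inv γ'))⁻¹
          = σ γ₀ γ' * (σ γ' (TG.inv γ'))⁻¹ := by
        have hco := hσ.cocycle γ₀ γ' (TG.inv γ') hcγ (aux_comp_self_inv KG γ')
        have hnr : σ γ₀ (TG.mul γ' (TG.inv γ')) = 1 := by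
          show σ γ₀ (TG.r γ') = 1
          rw [hγ'']
          exact hσ.norm_right γ₀
        rw [hnr, one_mul] at hco
        rw [← hco, mul_inv, ← mul_assoc, mul_inv_cancel, one_mul]
      have E3' : ((((σ (TG.mul γ₀ γ') (TG.inv γ'))⁻¹ : Tsub) : Rˣ) : R)
          = (((σ γ₀ γ' : Tsub) : Rˣ) : R)
            * ((((σ γ' (TG.inv γ'))⁻¹ : Tsub) : Rˣ) : R) := by
        rw [E3]
        push_cast
        ring
      show f (TS.mul (P γ₀) (P γ')) * g (TS.inv (P γ'))
        = ((((σ (TG.mul γ₀ γ') (TG.inv γ'))⁻¹ : Tsub) : Rˣ) : R)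
          * (f ∘ P) (TG.mul γ₀ γ') * (g ∘ P) (TG.inv γ')
      rw [E1, hE2 g hg γ', E3']
      show _ = _ * (f (P (TG.mul γ₀ γ'))) * (g (P (TG.inv γ')))
      ring
  -- the star is intertwined
  have hstar : ∀ c : R → R, IsTInverseInvolution Tsub c →
      ∀ f, f ∈ twistCarrier (R := R) TG TS i q →
        (twistStar TS c f) ∘ P
          = convStar TG (fun a b => (((σ a b)⁻¹ : Tsub) : Rˣ)) c (f ∘ P) := by
    intro c hc f hf
    funext γ
    show c (f (TS.inv (P γ)))
      = ((((fun a b => (((σ a b)⁻¹ : Tsub) : Rˣ)) γ (TG.inv γ))⁻¹ : Rˣ) : R)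
        * c ((f ∘ P) (TG.inv γ))
    rw [hE2 f hf γ, hc.2.2.1, hc.2.2.2.2 _ (SetLike.coe_mem ((σ γ (TG.inv γ))⁻¹))]
    show ((((((σ γ (TG.inv γ))⁻¹ : Tsub) : Rˣ))⁻¹ : Rˣ) : R) * c (f (P (TG.inv γ)))
      = (((((σ γ (TG.inv γ))⁻¹ : Tsub) : Rˣ)⁻¹ : Rˣ) : R) * c (f (P (TG.inv γ)))
    rfl
  exact ⟨hmaps, ⟨fun f hf => hmaps f hf, hinj, hsurj⟩,
    fun f g => rfl, fun a f => rfl, hconv, hstar⟩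




end TwistedSteinberg
end
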